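/- arXiv:0708.2771 — 5 statements merged into one kernel-verified Lean document; each statement's English description precedes it below -/
import Mathlib

section
/- Let m, r, n_1, …, n_m be positive integers, τ_1, …, τ_m nonnegative integers, N = n_1 + ⋯ + n_m, and A_k = (−1)^{k+N} C(N,k) ∏_{j=1}^{m} C(rk+n_j+τ_j, n_j) for 0 ≤ k ≤ N. Then ∑_{k=0}^{N} A_k = N!·r^N / (n_1!⋯n_m!). -/
open Finset Polynomial
open scoped fwdDiff

/-- Coefficient of the discrete derivative. -/
lemma taylor_sub_coeff (P : ℝ[X]) (i : ℕ) (h : P.natDegree ≤ i + 1) :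
    (Polynomial.taylor 1 P).coeff i - P.coeff i = (i + 1) * P.coeff (i + 1) := by
  rw [Polynomial.taylor_coeff]
  have hdeg : (Polynomial.hasseDeriv i P).natDegree < 2 := by
    have := Polynomial.natDegree_hasseDeriv_le P i
    omega
  rw [Polynomial.eval_eq_sum_range' hdeg, Finset.sum_range_succ, Finset.sum_range_one]
  simp only [Polynomial.hasseDeriv_coeff, zero_add, pow_zero, pow_one, mul_one,
    Nat.choose_self, Nat.cast_one, one_mul]
  rw [add_comm 1 i, Nat.choose_succ_self_right]
  push_cast
  ring

/-- N-th forward difference at 0 of a polynomial of degree ≤ N is N! times coeff N. -/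
lemma fwdDiff_poly (N : ℕ) : ∀ P : ℝ[X], P.natDegree ≤ N →
    (fwdDiff 1)^[N] (fun k : ℕ => P.eval (k : ℝ)) 0 = (N.factorial : ℝ) * P.coeff N := by
  induction N with
  | zero =>
      intro P hP
      have h1 : P.natDegree < 1 := by omega
      simp [Polynomial.eval_eq_sum_range' h1]
  | succ N ih =>
      intro P hP
      rw [Function.iterate_succ_apply]
      set Q : ℝ[X] := Polynomial.taylor 1 P - P with hQ
      have hfd : (fwdDiff 1) (fun k : ℕ => P.eval (k : ℝ)) = fun k : ℕ => Q.eval (k : ℝ) := by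
        funext k
        simp only [fwdDiff, hQ, Polynomial.eval_sub, Polynomial.taylor_apply,
          Polynomial.eval_comp, Polynomial.eval_add, Polynomial.eval_X, Polynomial.eval_C]
        push_cast
        ring_nf
      have hQcoeff : ∀ i, P.natDegree ≤ i + 1 → Q.coeff i = (i + 1) * P.coeff (i + 1) := by
        intro i hi
        simp only [hQ, Polynomial.coeff_sub]
        exact taylor_sub_coeff P i hi
      have hQdeg : Q.natDegree ≤ N := by
        rw [Polynomial.natDegree_le_iff_coeff_eq_zero]
        intro mm hm
        have h1 : P.natDegree ≤ mm + 1 := by omega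
        rw [hQcoeff mm h1, Polynomial.coeff_eq_zero_of_natDegree_lt (by omega), mul_zero]
      rw [hfd, ih Q hQdeg, hQcoeff N hP]
      rw [Nat.factorial_succ]
      push_cast
      ring
theorem stmt_11 (m r : ℕ) (hm : 0 < m) (hr : 0 < r) (n τ : ℕ → ℕ)
    (hn : ∀ j, 1 ≤ j → j ≤ m → 0 < n j)
    (N : ℕ) (hN : N = ∑ j ∈ Finset.Icc 1 m, n j)
    (A : ℕ → ℝ)
    (hA : ∀ k ≤ N, A k = (-1 : ℝ) ^ (k + N) * (N.choose k : ℝ) *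
      ∏ j ∈ Finset.Icc 1 m, ((r * k + n j + τ j).choose (n j) : ℝ)) :
    ∑ k ∈ Finset.range (N + 1), A k =
      (N.factorial : ℝ) * (r : ℝ) ^ N / ∏ j ∈ Finset.Icc 1 m, ((n j).factorial : ℝ) := by
  set P : ℝ[X] := ∏ j ∈ Finset.Icc 1 m, ∏ i ∈ Finset.range (n j),
    (Polynomial.C (r : ℝ) * Polynomial.X + Polynomial.C ((n j + τ j - i : ℕ) : ℝ)) with hP
  have hr' : (r : ℝ) ≠ 0 := by positivity
  have hD : (∏ j ∈ Finset.Icc 1 m, ((n j).factorial : ℝ)) ≠ 0 :=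
    Finset.prod_ne_zero_iff.mpr fun j _ => by positivity
  have hlin : ∀ (c : ℝ), (Polynomial.C (r : ℝ) * Polynomial.X + Polynomial.C c).natDegree = 1 :=
    fun c => Polynomial.natDegree_linear hr'
  have hne : ∀ (c : ℝ), (Polynomial.C (r : ℝ) * Polynomial.X + Polynomial.C c) ≠ 0 := by
    intro c hc
    have := hlin c
    rw [hc] at this
    simp at this
  -- degree of P
  have hPdeg : P.natDegree = N := by
    rw [hP, Polynomial.natDegree_prod _ _ (fun j _ => Finset.prod_ne_zero_iff.mpr
      fun i _ => hne _), hN]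
    refine Finset.sum_congr rfl fun j _ => ?_
    rw [Polynomial.natDegree_prod _ _ (fun i _ => hne _),
      Finset.sum_congr rfl (fun i _ => hlin (((n j + τ j - i : ℕ) : ℝ)))]
    simp
  -- leading coefficient of P
  have hPlead : P.leadingCoeff = (r : ℝ) ^ N := by
    rw [hP, Polynomial.leadingCoeff_prod]
    have h1 : ∀ j ∈ Finset.Icc 1 m, (∏ i ∈ Finset.range (n j),
        (Polynomial.C (r : ℝ) * Polynomial.X +
          Polynomial.C ((n j + τ j - i : ℕ) : ℝ))).leadingCoeff = (r : ℝ) ^ n j := by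
      intro j _
      rw [Polynomial.leadingCoeff_prod,
        Finset.prod_congr rfl (fun i _ => Polynomial.leadingCoeff_linear hr')]
      simp
    rw [Finset.prod_congr rfl h1, Finset.prod_pow_eq_pow_sum, hN]
  have hc : P.coeff N = (r : ℝ) ^ N := by
    rw [← hPlead, ← hPdeg]
    exact Polynomial.coeff_natDegree
  -- evaluation of P
  have hPeval : ∀ k : ℕ, P.eval (k : ℝ) =
      (∏ j ∈ Finset.Icc 1 m, ((r * k + n j + τ j).choose (n j) : ℝ)) *
      ∏ j ∈ Finset.Icc 1 m, ((n j).factorial : ℝ) := by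
    intro k
    rw [hP, Polynomial.eval_prod, ← Finset.prod_mul_distrib]
    refine Finset.prod_congr rfl fun j _ => ?_
    rw [Polynomial.eval_prod]
    have h2 : ((r * k + n j + τ j).choose (n j) : ℝ) * ((n j).factorial : ℝ)
        = ((r * k + n j + τ j).descFactorial (n j) : ℝ) := by
      rw [Nat.descFactorial_eq_factorial_mul_choose]; push_cast; ring
    rw [h2, Nat.descFactorial_eq_prod_range, Nat.cast_prod]
    refine Finset.prod_congr rfl fun i hi => ?_
    have hi' : i < n j := Finset.mem_range.mp hi
    simp only [Polynomial.eval_add, Polynomial.eval_mul, Polynomial.eval_C, Polynomial.eval_X]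
    have h1 : (r * k + n j + τ j - i : ℕ) = r * k + (n j + τ j - i) := by omega
    rw [h1]
    push_cast
    ring
  -- the finite difference identity
  have key : (N.factorial : ℝ) * (r : ℝ) ^ N
      = ∑ k ∈ Finset.range (N + 1), (-1 : ℝ) ^ (N - k) * (N.choose k : ℝ) * P.eval (k : ℝ) := by
    have h1 := fwdDiff_iter_eq_sum_shift (1 : ℕ) (fun k : ℕ => P.eval (k : ℝ)) N 0
    have h2 := fwdDiff_poly N P (le_of_eq hPdeg)
    rw [h2, hc] at h1
    rw [h1]
    refine Finset.sum_congr rfl fun k _ => ?_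
    simp only [smul_eq_mul, zero_add, mul_one, zsmul_eq_mul]
    push_cast
    ring
  have hsum : (∑ k ∈ Finset.range (N + 1), A k) *
      (∏ j ∈ Finset.Icc 1 m, ((n j).factorial : ℝ)) = (N.factorial : ℝ) * (r : ℝ) ^ N := by
    rw [Finset.sum_mul, key]
    refine Finset.sum_congr rfl fun k hk => ?_
    have hk' : k ≤ N := Nat.lt_succ_iff.mp (Finset.mem_range.mp hk)
    rw [hA k hk', hPeval k]
    have hsign : (-1 : ℝ) ^ (k + N) = (-1 : ℝ) ^ (N - k) := by
      rcases Nat.even_or_odd (k + N) with h | h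
      · rw [h.neg_one_pow,
          (Nat.even_iff.mpr (by rw [Nat.even_iff] at h; omega) : Even (N - k)).neg_one_pow]
      · rw [h.neg_one_pow,
          (Nat.odd_iff.mpr (by rw [Nat.odd_iff] at h; omega) : Odd (N - k)).neg_one_pow]
    rw [hsign]
    ring
  rw [eq_div_iff hD]
  exact hsum
end

section
/- Let m, r, n_1, …, n_m be positive integers, τ_1, …, τ_m nonnegative integers, N = n_1 + ⋯ + n_m, and define the rational function R(t) = [N!/(n_1!⋯n_m!)] · (rt−n_1−τ_1)_{n_1} (rt−n_2−τ_2)_{n_2} ⋯ (rt−n_m−τ_m)_{n_m} / (t(t+1)⋯(t+N)). Then R has the partial-fraction expansion R(t) = ∑_{k=0}^{N} A_k/(t+k), where A_k = (−1)^{k+N} C(N,k) ∏_{j=1}^{m} C(rk+n_j+τ_j, n_j); equivalently, for each k the residue of R at t = −k equals A_k. -/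
open Finset

lemma prod_erase_nodes (N k : ℕ) (hk : k ≤ N) :
    ∏ i ∈ (Finset.range (N+1)).erase k, ((i:ℝ) - k) =
      (-1)^k * (Nat.factorial k : ℝ) * (Nat.factorial (N - k) : ℝ) := by
  have hsplit : (Finset.range (N+1)).erase k = Finset.range k ∪ Finset.Ico (k+1) (N+1) := by
    ext i
    simp only [Finset.mem_erase, Finset.mem_range, Finset.mem_union, Finset.mem_Ico]
    omega
  have hdisj : Disjoint (Finset.range k) (Finset.Ico (k+1) (N+1)) := by
    simp only [Finset.disjoint_left, Finset.mem_range, Finset.mem_Ico]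
    omega
  have h1 : ∏ i ∈ Finset.range k, ((i:ℝ) - k) = (-1)^k * (Nat.factorial k : ℝ) := by
    have hnat : (∏ i ∈ Finset.range k, (k - i)) = Nat.factorial k := by
      rw [← Finset.prod_range_add_one_eq_factorial, ← Finset.prod_range_reflect (fun j => j + 1) k]
      exact Finset.prod_congr rfl fun i hi => by simp at hi; omega
    calc ∏ i ∈ Finset.range k, ((i:ℝ) - k)
        = ∏ i ∈ Finset.range k, ((-1) * ((k - i : ℕ) : ℝ)) := by
          refine Finset.prod_congr rfl fun i hi => ?_
          simp only [Finset.mem_range] at hi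
          have : ((k - i : ℕ) : ℝ) = (k : ℝ) - i := by
            push_cast [Nat.cast_sub hi.le]; ring
          rw [this]; ring
      _ = (-1)^k * ((∏ i ∈ Finset.range k, (k - i) : ℕ) : ℝ) := by
          rw [Finset.prod_mul_distrib, Finset.prod_const, Nat.cast_prod]
          simp [Finset.card_range]
      _ = (-1)^k * (Nat.factorial k : ℝ) := by rw [hnat]
  have h2 : ∏ i ∈ Finset.Ico (k+1) (N+1), ((i:ℝ) - k) = (Nat.factorial (N - k) : ℝ) := by
    rw [Finset.prod_Ico_eq_prod_range]
    have : N + 1 - (k + 1) = N - k := by omega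
    rw [this]
    calc ∏ i ∈ Finset.range (N - k), (((k + 1 + i : ℕ) : ℝ) - k)
        = ∏ i ∈ Finset.range (N - k), ((i : ℝ) + 1) := by
          refine Finset.prod_congr rfl fun i _ => ?_
          push_cast; ring
      _ = ((∏ i ∈ Finset.range (N - k), (i + 1) : ℕ) : ℝ) := by norm_cast
      _ = (Nat.factorial (N - k) : ℝ) := by rw [Finset.prod_range_add_one_eq_factorial]
  rw [hsplit, Finset.prod_union hdisj, h1, h2]

theorem stmt_12 (m r : ℕ) (hm : 0 < m) (hr : 0 < r) (n τ : ℕ → ℕ)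
    (hn : ∀ j, 1 ≤ j → j ≤ m → 0 < n j)
    (N : ℕ) (hN : N = ∑ j ∈ Finset.Icc 1 m, n j)
    (A : ℕ → ℝ)
    (hA : ∀ k ≤ N, A k = (-1 : ℝ) ^ (k + N) * (N.choose k : ℝ) *
      ∏ j ∈ Finset.Icc 1 m, ((r * k + n j + τ j).choose (n j) : ℝ))
    (R : ℝ → ℝ)
    (hR : ∀ t : ℝ, R t =
      ((N.factorial : ℝ) / ∏ j ∈ Finset.Icc 1 m, ((n j).factorial : ℝ)) *
        (∏ j ∈ Finset.Icc 1 m,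
          (ascPochhammer ℝ (n j)).eval ((r : ℝ) * t - n j - τ j)) /
        ∏ k ∈ Finset.range (N + 1), (t + k)) :
    ∀ t : ℝ, (∀ k ∈ Finset.range (N + 1), t + k ≠ 0) →
      R t = ∑ k ∈ Finset.range (N + 1), A k / (t + k) := by
  set c : ℝ := (N.factorial : ℝ) / ∏ j ∈ Finset.Icc 1 m, ((n j).factorial : ℝ) with hc
  set p : Polynomial ℝ := Polynomial.C c * ∏ j ∈ Finset.Icc 1 m,
    (ascPochhammer ℝ (n j)).comp
      (Polynomial.C (r:ℝ) * Polynomial.X - Polynomial.C ((n j : ℝ) + (τ j : ℝ))) with hp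
  set q : Polynomial ℝ := ∑ k ∈ Finset.range (N+1),
    Polynomial.C (A k) * ∏ i ∈ (Finset.range (N+1)).erase k,
      (Polynomial.X + Polynomial.C (i:ℝ)) with hq
  have hfacne : (∏ j ∈ Finset.Icc 1 m, ((n j).factorial : ℝ)) ≠ 0 :=
    Finset.prod_ne_zero_iff.mpr fun j _ => Nat.cast_ne_zero.mpr (Nat.factorial_ne_zero _)
  -- evaluation of p
  have hevalp : ∀ x : ℝ, p.eval x =
      c * ∏ j ∈ Finset.Icc 1 m, (ascPochhammer ℝ (n j)).eval ((r:ℝ) * x - (n j) - (τ j)) := by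
    intro x
    rw [hp]
    simp only [Polynomial.eval_mul, Polynomial.eval_C, Polynomial.eval_prod,
      Polynomial.eval_comp, Polynomial.eval_sub, Polynomial.eval_add, Polynomial.eval_X]
    congr 1
    refine Finset.prod_congr rfl fun j _ => ?_
    ring_nf
  -- evaluation of q
  have hevalq : ∀ x : ℝ, q.eval x =
      ∑ k ∈ Finset.range (N+1), A k * ∏ i ∈ (Finset.range (N+1)).erase k, (x + i) := by
    intro x
    rw [hq]
    simp only [Polynomial.eval_finset_sum, Polynomial.eval_mul, Polynomial.eval_C,
      Polynomial.eval_prod, Polynomial.eval_add, Polynomial.eval_X]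
  -- p = q
  have hpq : p = q := by
    set s : Finset ℝ := (Finset.range (N+1)).image (fun k : ℕ => -(k:ℝ)) with hs
    have hinj : Function.Injective (fun k : ℕ => -(k:ℝ)) := by
      intro a b hab
      simp only [neg_inj, Nat.cast_inj] at hab
      exact hab
    have hcard : s.card = N + 1 := by
      rw [hs, Finset.card_image_of_injective _ hinj, Finset.card_range]
    have hdegp : p.natDegree ≤ N := by
      calc p.natDegree ≤ (Polynomial.C c).natDegree + (∏ j ∈ Finset.Icc 1 m,
            (ascPochhammer ℝ (n j)).comp
              (Polynomial.C (r:ℝ) * Polynomial.X - Polynomial.C ((n j : ℝ) + (τ j : ℝ)))).natDegree :=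
            Polynomial.natDegree_mul_le
        _ ≤ 0 + ∑ j ∈ Finset.Icc 1 m, n j := by
            gcongr
            · simp
            · refine le_trans (Polynomial.natDegree_prod_le _ _) (Finset.sum_le_sum fun j _ => ?_)
              refine le_trans Polynomial.natDegree_comp_le ?_
              have h1 : (Polynomial.C (r:ℝ) * Polynomial.X -
                  Polynomial.C ((n j : ℝ) + (τ j : ℝ))).natDegree ≤ 1 := by
                rw [sub_eq_add_neg, ← Polynomial.C_neg]
                exact Polynomial.natDegree_linear_le
              calc (ascPochhammer ℝ (n j)).natDegree * (Polynomial.C (r:ℝ) * Polynomial.X -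
                    Polynomial.C ((n j : ℝ) + (τ j : ℝ))).natDegree
                  ≤ (ascPochhammer ℝ (n j)).natDegree * 1 := by gcongr
                _ = n j := by rw [mul_one, ascPochhammer_natDegree]
        _ = N := by rw [zero_add, hN]
    have hdegq : q.natDegree ≤ N := by
      refine Polynomial.natDegree_sum_le_of_forall_le _ _ fun k hk => ?_
      calc (Polynomial.C (A k) * ∏ i ∈ (Finset.range (N+1)).erase k,
            (Polynomial.X + Polynomial.C (i:ℝ))).natDegree
          ≤ (Polynomial.C (A k)).natDegree + (∏ i ∈ (Finset.range (N+1)).erase k,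
            (Polynomial.X + Polynomial.C (i:ℝ))).natDegree := Polynomial.natDegree_mul_le
        _ ≤ 0 + ∑ i ∈ (Finset.range (N+1)).erase k, 1 := by
            gcongr
            · simp
            · exact le_trans (Polynomial.natDegree_prod_le _ _) (Finset.sum_le_sum fun i _ =>
                le_of_eq (Polynomial.natDegree_X_add_C _))
        _ = ((Finset.range (N+1)).erase k).card := by rw [zero_add, Finset.sum_const, smul_eq_mul, mul_one]
        _ ≤ N := by
            rw [Finset.card_erase_of_mem hk, Finset.card_range]; omega
    have hdeg : ∀ f : Polynomial ℝ, f.natDegree ≤ N → f.degree < (s.card : WithBot ℕ) := by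
      intro f hf
      refine lt_of_le_of_lt Polynomial.degree_le_natDegree ?_
      rw [hcard]
      exact_mod_cast Nat.lt_succ_of_le hf
    refine Polynomial.eq_of_degrees_lt_of_eval_finset_eq s (hdeg p hdegp) (hdeg q hdegq) ?_
    intro x hx
    rw [hs] at hx
    obtain ⟨k, hkmem, rfl⟩ := Finset.mem_image.mp hx
    have hk : k ≤ N := Nat.lt_succ_iff.mp (Finset.mem_range.mp hkmem)
    -- q at -k
    have hq_eval : q.eval (-(k:ℝ)) = A k * ∏ i ∈ (Finset.range (N+1)).erase k, ((i:ℝ) - k) := by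
      rw [hevalq]
      rw [Finset.sum_eq_single k]
      · congr 1
        exact Finset.prod_congr rfl fun i _ => by ring
      · intro k' hk' hne
        have hkm : k ∈ (Finset.range (N+1)).erase k' := Finset.mem_erase.mpr ⟨hne.symm, hkmem⟩
        rw [Finset.prod_eq_zero hkm (by ring), mul_zero]
      · intro h; exact absurd hkmem h
    -- p at -k
    have hp_eval : p.eval (-(k:ℝ)) =
        c * ∏ j ∈ Finset.Icc 1 m, ((-1:ℝ)^(n j) *
          ((r * k + n j + τ j).descFactorial (n j) : ℝ)) := by
      rw [hevalp]
      congr 1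
      refine Finset.prod_congr rfl fun j _ => ?_
      have harg : (r:ℝ) * (-(k:ℝ)) - (n j) - (τ j) = -(((r * k + n j + τ j : ℕ) : ℝ)) := by
        push_cast; ring
      rw [harg, ascPochhammer_eval_neg_eq_descPochhammer,
        descPochhammer_eval_eq_descFactorial]
    rw [hp_eval, hq_eval, prod_erase_nodes N k hk, hA k hk]
    -- arithmetic identity
    have hdf : ∀ j, ((r * k + n j + τ j).descFactorial (n j) : ℝ) =
        ((n j).factorial : ℝ) * ((r * k + n j + τ j).choose (n j) : ℝ) := by
      intro j
      rw [Nat.descFactorial_eq_factorial_mul_choose]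
      push_cast; ring
    have hsplit : ∏ j ∈ Finset.Icc 1 m, ((-1:ℝ)^(n j) *
        ((r * k + n j + τ j).descFactorial (n j) : ℝ)) =
        (-1:ℝ)^N * (∏ j ∈ Finset.Icc 1 m, ((n j).factorial : ℝ)) *
          (∏ j ∈ Finset.Icc 1 m, ((r * k + n j + τ j).choose (n j) : ℝ)) := by
      rw [Finset.prod_mul_distrib, Finset.prod_pow_eq_pow_sum, ← hN]
      rw [show (∏ j ∈ Finset.Icc 1 m, ((r * k + n j + τ j).descFactorial (n j) : ℝ)) =
          ∏ j ∈ Finset.Icc 1 m, (((n j).factorial : ℝ) *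
            ((r * k + n j + τ j).choose (n j) : ℝ)) from
        Finset.prod_congr rfl fun j _ => hdf j]
      rw [Finset.prod_mul_distrib]
      ring
    rw [hsplit]
    have hcf : c * (∏ j ∈ Finset.Icc 1 m, ((n j).factorial : ℝ)) = (N.factorial : ℝ) := by
      rw [hc, div_mul_cancel₀ _ hfacne]
    have hNfac : ((N.choose k : ℝ)) * (k.factorial : ℝ) * ((N - k).factorial : ℝ)
        = (N.factorial : ℝ) := by
      exact_mod_cast congrArg (Nat.cast (R := ℝ)) (Nat.choose_mul_factorial_mul_factorial hk)
    have hpow : ((-1:ℝ))^(k + N) * (-1:ℝ)^k = (-1:ℝ)^N := by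
      rw [← pow_add]
      have : k + N + k = 2 * k + N := by ring
      rw [this, pow_add, pow_mul]
      norm_num
    calc c * ((-1:ℝ)^N * (∏ j ∈ Finset.Icc 1 m, ((n j).factorial : ℝ)) *
          (∏ j ∈ Finset.Icc 1 m, ((r * k + n j + τ j).choose (n j) : ℝ)))
        = (-1:ℝ)^N * (c * ∏ j ∈ Finset.Icc 1 m, ((n j).factorial : ℝ)) *
          (∏ j ∈ Finset.Icc 1 m, ((r * k + n j + τ j).choose (n j) : ℝ)) := by ring
      _ = (-1:ℝ)^N * (N.factorial : ℝ) *
          (∏ j ∈ Finset.Icc 1 m, ((r * k + n j + τ j).choose (n j) : ℝ)) := by rw [hcf]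
      _ = (-1:ℝ)^(k+N) * (N.choose k : ℝ) *
          (∏ j ∈ Finset.Icc 1 m, ((r * k + n j + τ j).choose (n j) : ℝ)) *
          ((-1:ℝ)^k * (k.factorial : ℝ) * ((N - k).factorial : ℝ)) := by
          rw [← hNfac, ← hpow]; ring
  -- final step
  intro t ht
  have hD : (∏ k ∈ Finset.range (N + 1), (t + (k:ℝ))) ≠ 0 :=
    Finset.prod_ne_zero_iff.mpr ht
  have hpt : p.eval t = q.eval t := by rw [hpq]
  rw [hevalp, hevalq] at hpt
  rw [hR t, hpt, Finset.sum_div]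
  refine Finset.sum_congr rfl fun k hk => ?_
  have herasene : (∏ i ∈ (Finset.range (N+1)).erase k, (t + (i:ℝ))) ≠ 0 :=
    Finset.prod_ne_zero_iff.mpr fun i hi => ht i (Finset.mem_of_mem_erase hi)
  rw [show (∏ i ∈ Finset.range (N + 1), (t + (i:ℝ))) =
      (t + k) * ∏ i ∈ (Finset.range (N+1)).erase k, (t + (i:ℝ)) from
    (Finset.mul_prod_erase _ _ hk).symm]
  exact mul_div_mul_right _ _ herasene
end

section
/- Let α ≥ 0 be a real number, m, r, n_1, …, n_m positive integers, τ_0, τ_1, …, τ_m nonnegative integers, N = n_1 + ⋯ + n_m, A(x) = ∑_{k=0}^{N} A_k x^{rk} with A_k = (−1)^{k+N} C(N,k) ∏_{j=1}^{m} C(rk+n_j+τ_j, n_j), and I(α) = ∫_0^1 x^{τ_0+α} A(x) (1/(1−x) + 1/log x) dx. Then I(α) = [N!·r^N/(n_1!⋯n_m!)] · γ_α − ∑_{k=0}^{N} A_k S_{rk+τ_0}(α). -/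
open Finset

/-- `S_n(α) = ∑_{k=1}^n (1/(k+α) − log((k+α+1)/(k+α)))`. -/
noncomputable def Sa (α : ℝ) (n : ℕ) : ℝ :=
  ∑ k ∈ Finset.range n,
    (1 / ((k : ℝ) + 1 + α) - Real.log (((k : ℝ) + 1 + α + 1) / ((k : ℝ) + 1 + α)))

open Polynomial MeasureTheory Set intervalIntegral


lemma findiff : ∀ (N : ℕ) (P : ℝ[X]), P.natDegree ≤ N →
    ∑ k ∈ range (N+1), (-1:ℝ)^(k+N) * (N.choose k : ℝ) * P.eval (k:ℝ)
      = (N.factorial : ℝ) * P.coeff N := by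
  intro N
  induction N with
  | zero =>
    intro P hP
    simp [Polynomial.eval_eq_sum_range' (lt_of_le_of_lt hP Nat.zero_lt_one)]
  | succ N ih =>
    intro P hP
    set Q : ℝ[X] := taylor 1 P - P with hQ
    have hQc : ∀ j, Q.coeff j = (taylor 1 P).coeff j - P.coeff j := by
      intro j; simp [hQ]
    have hhd : ∀ j, j ≤ (N+1) → ∀ x:ℝ, (hasseDeriv j P).eval x =
        ∑ i ∈ range (N+2-j), (hasseDeriv j P).coeff i * x ^ i := by
      intro j hj x
      apply Polynomial.eval_eq_sum_range'
      calc (hasseDeriv j P).natDegree ≤ P.natDegree - j := natDegree_hasseDeriv_le P j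
        _ < N+2-j := by omega
    have hQN : Q.coeff N = (N+1 : ℝ) * P.coeff (N+1) := by
      rw [hQc, taylor_coeff, hhd N (by omega), show N+2-N = 2 from by omega]
      simp [Finset.sum_range_succ, hasseDeriv_coeff]
      rw [show 1+N = N+1 from by omega, Nat.choose_succ_self_right]
      push_cast; ring
    have hQd : Q.natDegree ≤ N := by
      apply Polynomial.natDegree_le_iff_coeff_eq_zero.2
      intro j hj
      rw [hQc, taylor_coeff]
      rcases eq_or_lt_of_le (show N+1 ≤ j by omega) with h | h
      · subst h
        rw [hhd (N+1) le_rfl, show N+2-(N+1) = 1 from by omega]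
        simp [hasseDeriv_coeff]
      · have hz : hasseDeriv j P = 0 := by
          ext i
          simp only [hasseDeriv_coeff, coeff_zero]
          rw [Polynomial.coeff_eq_zero_of_natDegree_lt (by omega)]
          ring
        rw [hz, Polynomial.coeff_eq_zero_of_natDegree_lt (by omega)]
        simp
    have key := ih Q hQd
    have hev : ∀ i : ℕ, Q.eval (i:ℝ) = P.eval ((i:ℝ)+1) - P.eval (i:ℝ) := by
      intro i; simp [hQ, taylor_eval]
    have hstep : ∑ i ∈ range (N+1),
          (-1:ℝ)^(i+1+(N+1)) * (((N+1).choose (i+1)):ℝ) * P.eval (((i+1:ℕ)):ℝ)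
        = (∑ i ∈ range (N+1), (-1:ℝ)^(i+N) * (N.choose i : ℝ) * P.eval ((i:ℝ)+1))
          + ∑ i ∈ range (N+1), (-1:ℝ)^(i+N) * (N.choose (i+1) : ℝ) * P.eval ((i:ℝ)+1) := by
      rw [← Finset.sum_add_distrib]
      apply Finset.sum_congr rfl
      intro i _
      rw [Nat.choose_succ_succ]
      have hsgn : (-1:ℝ)^(i+1+(N+1)) = (-1:ℝ)^(i+N) := by
        rw [show i+1+(N+1) = (i+N)+2 from by omega, pow_add]; norm_num
      rw [hsgn]
      push_cast
      ring
    have h2 : ∑ i ∈ range (N+1), (-1:ℝ)^(i+N) * (N.choose (i+1) : ℝ) * P.eval ((i:ℝ)+1)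
        = - (∑ k ∈ range (N+1), (-1:ℝ)^(k+N) * (N.choose k : ℝ) * P.eval (k:ℝ))
          - (-1:ℝ)^(N+1) * P.eval 0 := by
      have h3 : ∑ k ∈ range (N+2), (-1:ℝ)^(k+N+1) * (N.choose k : ℝ) * P.eval (k:ℝ)
          = ∑ i ∈ range (N+1), (-1:ℝ)^(i+N) * (N.choose (i+1) : ℝ) * P.eval ((i:ℝ)+1)
            + (-1:ℝ)^(N+1) * P.eval 0 := by
        rw [Finset.sum_range_succ']
        congr 1
        · apply Finset.sum_congr rfl
          intro i _
          have hsgn : (-1:ℝ)^(i+1+N+1) = (-1:ℝ)^(i+N) := by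
            rw [show i+1+N+1 = (i+N)+2 from by omega, pow_add]; norm_num
          rw [hsgn]; push_cast; ring
        · simp
      have h4 : ∑ k ∈ range (N+2), (-1:ℝ)^(k+N+1) * (N.choose k : ℝ) * P.eval (k:ℝ)
          = - ∑ k ∈ range (N+1), (-1:ℝ)^(k+N) * (N.choose k : ℝ) * P.eval (k:ℝ) := by
        rw [Finset.sum_range_succ, Nat.choose_succ_self, ← Finset.sum_neg_distrib]
        simp only [Nat.cast_zero, mul_zero, zero_mul, add_zero]
        apply Finset.sum_congr rfl
        intro k _
        have : (-1:ℝ)^(k+N+1) = -(-1:ℝ)^(k+N) := by rw [pow_succ]; ring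
        rw [this]; ring
      rw [h4] at h3
      linarith [h3]
    have hR : ∑ k ∈ range (N+1), (-1:ℝ)^(k+N) * (N.choose k:ℝ) * Q.eval (k:ℝ)
        = (∑ i ∈ range (N+1), (-1:ℝ)^(i+N) * (N.choose i:ℝ) * P.eval ((i:ℝ)+1))
          - ∑ k ∈ range (N+1), (-1:ℝ)^(k+N) * (N.choose k:ℝ) * P.eval (k:ℝ) := by
      rw [← Finset.sum_sub_distrib]
      apply Finset.sum_congr rfl
      intro k _
      rw [hev]; ring
    have split : ∑ k ∈ range (N+2), (-1:ℝ)^(k+(N+1)) * ((N+1).choose k : ℝ) * P.eval (k:ℝ)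
        = ∑ k ∈ range (N+1), (-1:ℝ)^(k+N) * (N.choose k : ℝ) * Q.eval (k:ℝ) := by
      rw [Finset.sum_range_succ', hstep, h2, hR]
      simp
      ring
    rw [split, key, hQN, Nat.factorial_succ]
    push_cast; ring

lemma prod_choose (a b : ℕ) : ∏ i ∈ range b, (a+i+1) = (a+b).choose b * b.factorial := by
  induction b with
  | zero => simp
  | succ b ih =>
    rw [Finset.prod_range_succ, ih, Nat.factorial_succ]
    have h := Nat.add_one_mul_choose_eq (a+b) b
    have : (a+b).succ = a + b + 1 := rfl
    calc (a + b).choose b * b.factorial * (a + b + 1)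
        = ((a+b+1) * (a+b).choose b) * b.factorial := by ring
      _ = ((a+b+1).choose (b+1) * (b+1)) * b.factorial := by rw [← h]
      _ = (a + (b+1)).choose (b+1) * ((b+1) * b.factorial) := by rw [show a+b+1 = a+(b+1) from by ring]; ring

lemma sumA (m r : ℕ) (hr : 0 < r) (n τ : ℕ → ℕ) (N : ℕ) (hN : N = ∑ j ∈ Icc 1 m, n j) :
    ∑ k ∈ range (N+1), (-1:ℝ)^(k+N) * (N.choose k : ℝ) *
        ∏ j ∈ Icc 1 m, ((r*k+n j+τ j).choose (n j) : ℝ)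
      = (N.factorial : ℝ) * (r:ℝ)^N / ∏ j ∈ Icc 1 m, ((n j).factorial : ℝ) := by
  have hD : (∏ j ∈ Icc 1 m, ((n j).factorial : ℝ)) ≠ 0 := by
    apply Finset.prod_ne_zero_iff.2
    intro j _
    exact_mod_cast (n j).factorial_ne_zero
  rw [eq_div_iff hD, Finset.sum_mul]
  set P : ℝ[X] := ∏ j ∈ Icc 1 m, ∏ i ∈ range (n j), (C (r:ℝ) * X + C ((τ j : ℝ) + i + 1)) with hP
  have hrne : (r:ℝ) ≠ 0 := by positivity
  have hlin_ne : ∀ (c : ℝ), C (r:ℝ) * X + C c ≠ 0 := by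
    intro c h
    have := natDegree_linear (b := c) hrne
    rw [h] at this
    simp at this
  have hinner_ne : ∀ j, (∏ i ∈ range (n j), (C (r:ℝ) * X + C ((τ j : ℝ) + i + 1))) ≠ 0 := by
    intro j
    exact Finset.prod_ne_zero_iff.2 (fun i _ => hlin_ne _)
  have hdeg : P.natDegree = N := by
    rw [hP, Polynomial.natDegree_prod _ _ (fun j _ => hinner_ne j), hN]
    apply Finset.sum_congr rfl
    intro j _
    rw [Polynomial.natDegree_prod _ _ (fun i _ => hlin_ne _)]
    have h5 : ∑ i ∈ range (n j), (C (r:ℝ) * X + C ((τ j : ℝ) + (i:ℝ) + 1)).natDegree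
        = ∑ i ∈ range (n j), 1 :=
      Finset.sum_congr rfl (fun i _ => natDegree_linear hrne)
    rw [h5]
    simp
  have hlc : P.coeff N = (r:ℝ)^N := by
    have h1 : P.leadingCoeff = (r:ℝ)^N := by
      rw [hP, Polynomial.leadingCoeff_prod, hN, ← Finset.prod_pow_eq_pow_sum]
      apply Finset.prod_congr rfl
      intro j _
      rw [Polynomial.leadingCoeff_prod]
      have h5 : ∏ i ∈ range (n j), (C (r:ℝ) * X + C ((τ j : ℝ) + (i:ℝ) + 1)).leadingCoeff
          = ∏ i ∈ range (n j), (r:ℝ) :=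
        Finset.prod_congr rfl (fun i _ => leadingCoeff_linear hrne)
      rw [h5]
      simp
    rw [← h1, Polynomial.leadingCoeff, hdeg]
  have heval : ∀ k : ℕ, P.eval (k:ℝ) =
      ∏ j ∈ Icc 1 m, (((r*k+n j+τ j).choose (n j) : ℝ) * ((n j).factorial : ℝ)) := by
    intro k
    rw [hP, Polynomial.eval_prod]
    apply Finset.prod_congr rfl
    intro j _
    rw [Polynomial.eval_prod]
    have := prod_choose (r*k + τ j) (n j)
    have hcast : ((∏ i ∈ range (n j), (r*k + τ j + i + 1) : ℕ) : ℝ)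
        = (((r*k + τ j + n j).choose (n j) : ℕ) : ℝ) * ((n j).factorial : ℝ) := by
      rw [this]; push_cast; ring
    rw [show r*k+n j+τ j = r*k+τ j+n j from by ring]
    rw [← hcast]
    push_cast
    apply Finset.prod_congr rfl
    intro i _
    simp
    ring
  have hfd := findiff N P (le_of_eq hdeg)
  rw [hlc] at hfd
  rw [← hfd]
  apply Finset.sum_congr rfl
  intro k _
  rw [heval, mul_assoc, ← Finset.prod_mul_distrib]

noncomputable def gfun (x : ℝ) : ℝ := 1 / (1 - x) + 1 / Real.log x

lemma gfun_bound {x : ℝ} (hx : x ∈ Set.Icc (0:ℝ) 1) : 0 ≤ gfun x ∧ gfun x ≤ 1 := by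
  obtain ⟨h0, h1⟩ := hx
  rcases eq_or_lt_of_le h0 with h | h0'
  · subst h; simp [gfun]
  rcases eq_or_lt_of_le h1 with h | h1'
  · rw [h]; simp [gfun]
  -- 0 < x < 1
  have hlog : Real.log x < 0 := Real.log_neg h0' h1'
  have h1x : 0 < 1 - x := by linarith
  have hL : 0 < -Real.log x := by linarith
  have key1 : 1 - x ≤ -Real.log x := by
    have := Real.log_le_sub_one_of_pos h0'
    linarith
  have key2 : -Real.log x ≤ (1 - x) / x := by
    have h2 := Real.log_le_sub_one_of_pos (show (0:ℝ) < 1/x by positivity)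
    rw [Real.log_div one_ne_zero (ne_of_gt h0'), Real.log_one] at h2
    have : (1:ℝ)/x - 1 = (1-x)/x := by field_simp
    linarith [this ▸ h2]
  have e1 : gfun x = 1/(1-x) - 1/(-Real.log x) := by
    rw [gfun]
    have : Real.log x ≠ 0 := ne_of_lt hlog
    field_simp
    ring
  constructor
  · rw [e1, sub_nonneg]
    exact one_div_le_one_div_of_le h1x key1
  · rw [e1]
    have h3 : x / (1-x) ≤ 1/(-Real.log x) := by
      rw [div_le_div_iff₀ h1x hL]
      calc x * -Real.log x ≤ x * ((1-x)/x) := by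
            apply mul_le_mul_of_nonneg_left key2 (le_of_lt h0')
        _ = 1 * (1 - x) := by field_simp
    have : 1/(1-x) - x/(1-x) = 1 := by
      rw [div_sub_div_same]
      field_simp
    linarith

lemma gfun_meas : Measurable gfun := by
  have : gfun = fun x => (1 - x)⁻¹ + (Real.log x)⁻¹ := by
    funext x; simp [gfun, one_div]
  rw [this]
  exact ((measurable_const.sub measurable_id).inv).add Real.measurable_log.inv

lemma hfs_meas (s : ℝ) : Measurable (fun x : ℝ => x ^ s * gfun x) :=
  (measurable_id.pow measurable_const).mul gfun_meas

lemma rpow_integrableOn (s : ℝ) (hs : 0 ≤ s) :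
    IntegrableOn (fun x : ℝ => x ^ s) (Set.Ioc (0:ℝ) 1) := by
  rw [← intervalIntegrable_iff_integrableOn_Ioc_of_le zero_le_one]
  exact intervalIntegrable_rpow' (by linarith)

lemma rpow_integral (s : ℝ) (hs : 0 ≤ s) :
    ∫ x in Set.Ioc (0:ℝ) 1, x ^ s = 1 / (s + 1) := by
  rw [← intervalIntegral.integral_of_le zero_le_one,
    integral_rpow (Or.inl (by linarith : (-1:ℝ) < s))]
  rw [Real.one_rpow, Real.zero_rpow (by linarith : s + 1 ≠ 0)]
  simp

lemma hfs_bound (s : ℝ) (hs : 0 ≤ s) {x : ℝ} (hx : x ∈ Set.Ioc (0:ℝ) 1) :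
    ‖x ^ s * gfun x‖ ≤ x ^ s := by
  obtain ⟨hg0, hg1⟩ := gfun_bound (Set.mem_Icc.2 ⟨le_of_lt hx.1, hx.2⟩)
  have hxp : (0:ℝ) ≤ x ^ s := Real.rpow_nonneg (le_of_lt hx.1) s
  rw [Real.norm_eq_abs, abs_mul, abs_of_nonneg hxp, abs_of_nonneg hg0]
  calc x ^ s * gfun x ≤ x ^ s * 1 := mul_le_mul_of_nonneg_left hg1 hxp
    _ = x ^ s := mul_one _

lemma hfs_int (s : ℝ) (hs : 0 ≤ s) :
    IntegrableOn (fun x : ℝ => x ^ s * gfun x) (Set.Ioc (0:ℝ) 1) := by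
  apply Integrable.mono' (rpow_integrableOn s hs)
    (hfs_meas s).aestronglyMeasurable
  exact (ae_restrict_mem measurableSet_Ioc).mono (fun x hx => hfs_bound s hs hx)

noncomputable def Kint (s : ℝ) : ℝ := ∫ x in Set.Ioc (0:ℝ) 1, x ^ s * gfun x

lemma Kint_bound (s : ℝ) (hs : 0 ≤ s) : ‖Kint s‖ ≤ 1 / (s + 1) := by
  rw [Kint, ← rpow_integral s hs]
  apply MeasureTheory.norm_integral_le_of_norm_le (rpow_integrableOn s hs)
  exact (ae_restrict_mem measurableSet_Ioc).mono (fun x hx => hfs_bound s hs hx)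

lemma ae_Ioo_of_Ioc :
    ∀ᵐ x ∂(volume.restrict (Set.Ioc (0:ℝ) 1)), x ∈ Set.Ioo (0:ℝ) 1 := by
  have h1 : ∀ᵐ x ∂(volume.restrict (Set.Ioc (0:ℝ) 1)), x ∈ Set.Ioc (0:ℝ) 1 :=
    ae_restrict_mem measurableSet_Ioc
  have h2 : ∀ᵐ x : ℝ ∂(volume.restrict (Set.Ioc (0:ℝ) 1)), x ≠ 1 := by
    apply ae_restrict_of_ae
    filter_upwards [measure_eq_zero_iff_ae_notMem.1 (Real.volume_singleton (a := (1:ℝ)))] with x hx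
    simpa using hx
  filter_upwards [h1, h2] with x hx hne
  exact ⟨hx.1, lt_of_le_of_ne hx.2 hne⟩

lemma exp_integral (L : ℝ) (hL : L ≠ 0) (a b : ℝ) :
    ∫ t in a..b, Real.exp (L * t) = (Real.exp (L * b) - Real.exp (L * a)) / L := by
  have := intervalIntegral.integral_comp_mul_left (a := a) (b := b) (c := L)
    (f := fun y => Real.exp y) hL
  rw [this, integral_exp]
  rw [smul_eq_mul]
  field_simp

lemma frullani_aux (a b : ℝ) (ha : 0 ≤ a) (hab : a ≤ b) :
    IntegrableOn (fun x : ℝ => (x ^ a - x ^ b) / Real.log x) (Set.Ioc (0:ℝ) 1)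
      ∧ ∫ x in Set.Ioc (0:ℝ) 1, (x ^ a - x ^ b) / Real.log x
        = Real.log (a+1) - Real.log (b+1) := by
  set μ := volume.restrict (Set.Ioc (0:ℝ) 1)
  set ν := volume.restrict (Set.Ioc a b)
  have hFm : Measurable (fun p : ℝ × ℝ => p.1 ^ p.2) :=
    measurable_fst.pow measurable_snd
  have hμfin : IsFiniteMeasure μ := by
    constructor
    rw [Measure.restrict_apply_univ]
    simp [Real.volume_Ioc]
  have hνfin : IsFiniteMeasure ν := by
    constructor
    rw [Measure.restrict_apply_univ]
    simp [Real.volume_Ioc]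
  have hprod : μ.prod ν = (volume.prod volume).restrict
      ((Set.Ioc (0:ℝ) 1) ×ˢ (Set.Ioc a b)) := Measure.prod_restrict _ _
  have haemem : ∀ᵐ p : ℝ × ℝ ∂(μ.prod ν),
      p ∈ (Set.Ioc (0:ℝ) 1) ×ˢ (Set.Ioc a b) := by
    rw [hprod]
    exact ae_restrict_mem (measurableSet_Ioc.prod measurableSet_Ioc)
  have hFint : Integrable (Function.uncurry (fun x t : ℝ => x ^ t)) (μ.prod ν) := by
    apply Integrable.mono' (integrable_const (1:ℝ)) hFm.aestronglyMeasurable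
    filter_upwards [haemem] with p hp
    rcases p with ⟨x, t⟩
    obtain ⟨⟨hx0, hx1⟩, ⟨ht0, _⟩⟩ := hp
    simp only [Function.uncurry_apply_pair]
    rw [Real.norm_eq_abs, abs_of_nonneg (Real.rpow_nonneg (le_of_lt hx0) _)]
    exact Real.rpow_le_one (le_of_lt hx0) hx1 (le_trans ha (le_of_lt ht0))
  have hswap := MeasureTheory.integral_integral_swap hFint
  -- RHS: ∫ t, ∫ x, x^t dx dt = ∫ t in Ioc a b, 1/(t+1)
  have hR : ∫ t, (∫ x, x ^ t ∂μ) ∂ν = Real.log (b+1) - Real.log (a+1) := by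
    have h1 : ∀ t ∈ Set.Ioc a b, (∫ x, x ^ t ∂μ) = (t+1)⁻¹ := by
      intro t ht
      rw [show (∫ x, x ^ t ∂μ) = ∫ x in Set.Ioc (0:ℝ) 1, x ^ t from rfl,
        rpow_integral t (le_trans ha (le_of_lt ht.1))]
      rw [one_div]
    rw [MeasureTheory.setIntegral_congr_fun measurableSet_Ioc h1]
    rw [show (∫ t in Set.Ioc a b, (t+1)⁻¹) = ∫ t in a..b, (t+1)⁻¹ from
      (intervalIntegral.integral_of_le hab).symm]
    rw [show (∫ t in a..b, (t+1)⁻¹) = ∫ t in (a+1)..(b+1), t⁻¹ from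
      intervalIntegral.integral_comp_add_right (fun y => y⁻¹) 1]
    rw [integral_inv (by
      intro hmem
      rcases Set.mem_uIcc.1 hmem with ⟨h1', _⟩ | ⟨_, h2'⟩ <;> linarith)]
    rw [Real.log_div (by linarith) (by linarith)]
  -- LHS: inner integral in t
  have hL : (fun x : ℝ => ∫ t, x ^ t ∂ν) =ᵐ[μ]
      (fun x : ℝ => (x ^ b - x ^ a) / Real.log x) := by
    filter_upwards [ae_Ioo_of_Ioc] with x hx
    obtain ⟨hx0, hx1⟩ := hx
    have hlogne : Real.log x ≠ 0 := ne_of_lt (Real.log_neg hx0 hx1)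
    have hxt : ∀ t : ℝ, x ^ t = Real.exp (Real.log x * t) := fun t =>
      Real.rpow_def_of_pos hx0 t
    rw [show (∫ t, x ^ t ∂ν) = ∫ t in Set.Ioc a b, x ^ t from rfl,
      ← intervalIntegral.integral_of_le hab]
    calc ∫ t in a..b, x ^ t
        = ∫ t in a..b, Real.exp (Real.log x * t) := by
          apply intervalIntegral.integral_congr; intro t _; exact hxt t
      _ = (Real.exp (Real.log x * b) - Real.exp (Real.log x * a)) / Real.log x :=
          exp_integral _ hlogne a b
      _ = (x ^ b - x ^ a) / Real.log x := by rw [← hxt, ← hxt]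
  have hIntInner : Integrable (fun x : ℝ => ∫ t, x ^ t ∂ν) μ := by
    have := MeasureTheory.Integrable.integral_prod_left hFint
    simpa [Function.uncurry] using this
  constructor
  · have h2 : Integrable (fun x : ℝ => (x ^ b - x ^ a) / Real.log x) μ :=
      hIntInner.congr hL
    have h3 : Integrable (fun x : ℝ => -((x ^ b - x ^ a) / Real.log x)) μ := h2.neg
    apply h3.congr
    filter_upwards with x
    ring
  · have h4 : ∫ x, (∫ t, x ^ t ∂ν) ∂μ = ∫ x, (x ^ b - x ^ a) / Real.log x ∂μ :=
      MeasureTheory.integral_congr_ae hL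
    have h5 : ∫ x, (x ^ a - x ^ b) / Real.log x ∂μ
        = - ∫ x, (x ^ b - x ^ a) / Real.log x ∂μ := by
      rw [← MeasureTheory.integral_neg]
      apply MeasureTheory.integral_congr_ae
      filter_upwards with x
      ring
    rw [h5, ← h4, hswap, hR]
    ring

lemma part1 (α : ℝ) (hα : 0 ≤ α) (c M : ℕ) :
    IntegrableOn (fun x : ℝ => (x ^ ((c:ℝ)+α) - x ^ ((c:ℝ)+M+α)) * (1/(1-x)))
        (Set.Ioc (0:ℝ) 1)
    ∧ ∫ x in Set.Ioc (0:ℝ) 1, (x ^ ((c:ℝ)+α) - x ^ ((c:ℝ)+M+α)) * (1/(1-x))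
      = ∑ i ∈ Finset.range M, 1/((c:ℝ)+i+α+1) := by
  set S : ℝ → ℝ := fun x => ∑ i ∈ Finset.range M, x ^ ((c:ℝ)+(i:ℝ)+α) with hS
  have heq : ∀ᵐ x ∂(volume.restrict (Set.Ioc (0:ℝ) 1)),
      S x = (x ^ ((c:ℝ)+α) - x ^ ((c:ℝ)+M+α)) * (1/(1-x)) := by
    filter_upwards [ae_Ioo_of_Ioc] with x hx
    obtain ⟨hx0, hx1⟩ := hx
    have hne : x ≠ 1 := ne_of_lt hx1
    have h1x : 1 - x ≠ 0 := by intro h; apply hne; linarith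
    have hterm : ∀ i : ℕ, x ^ ((c:ℝ)+(i:ℝ)+α) = x ^ ((c:ℝ)+α) * x ^ i := by
      intro i
      rw [show (c:ℝ)+(i:ℝ)+α = ((c:ℝ)+α)+(i:ℝ) from by ring, Real.rpow_add hx0,
        Real.rpow_natCast]
    have hgeom : ∑ i ∈ Finset.range M, x ^ i = (x ^ M - 1)/(x - 1) := geom_sum_eq hne M
    have hb : x ^ ((c:ℝ)+M+α) = x ^ ((c:ℝ)+α) * x ^ M := by
      rw [show (c:ℝ)+(M:ℝ)+α = ((c:ℝ)+α)+(M:ℝ) from by ring, Real.rpow_add hx0,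
        Real.rpow_natCast]
    rw [hS]
    simp only [hterm]
    rw [← Finset.mul_sum, hgeom]
    have hx1ne : x - 1 ≠ 0 := by intro h; apply hne; linarith
    have e1 : (x ^ M - 1) / (x - 1) = (1 - x ^ M) / (1 - x) := by
      rw [div_eq_div_iff hx1ne h1x]
      ring
    rw [e1, div_eq_mul_inv, one_div]
    ring
  have hexp : ∀ i : ℕ, (0:ℝ) ≤ (c:ℝ)+(i:ℝ)+α := by
    intro i
    have h1 := Nat.cast_nonneg (α := ℝ) c
    have h2 := Nat.cast_nonneg (α := ℝ) i
    linarith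
  have hSint : IntegrableOn S (Set.Ioc (0:ℝ) 1) := by
    apply MeasureTheory.integrable_finset_sum
    intro i _
    exact rpow_integrableOn _ (hexp i)
  have hSval : ∫ x in Set.Ioc (0:ℝ) 1, S x = ∑ i ∈ Finset.range M, 1/((c:ℝ)+i+α+1) := by
    calc ∫ x in Set.Ioc (0:ℝ) 1, S x
        = ∫ x in Set.Ioc (0:ℝ) 1, ∑ i ∈ Finset.range M, x ^ ((c:ℝ)+(i:ℝ)+α) := rfl
      _ = ∑ i ∈ Finset.range M, ∫ x in Set.Ioc (0:ℝ) 1, x ^ ((c:ℝ)+(i:ℝ)+α) :=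
          MeasureTheory.integral_finset_sum _ (fun i _ => rpow_integrableOn _ (hexp i))
      _ = ∑ i ∈ Finset.range M, 1/((c:ℝ)+i+α+1) :=
          Finset.sum_congr rfl (fun i _ => by rw [rpow_integral _ (hexp i)])
  exact ⟨hSint.congr heq, by rw [← MeasureTheory.integral_congr_ae heq, hSval]⟩

lemma Kdiff (α : ℝ) (hα : 0 ≤ α) (c M : ℕ) :
    Kint ((c:ℝ)+α) - Kint ((c:ℝ)+M+α)
      = (∑ i ∈ Finset.range M, 1/((c:ℝ)+i+α+1))
        + (Real.log ((c:ℝ)+α+1) - Real.log ((c:ℝ)+M+α+1)) := by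
  have hc0 := Nat.cast_nonneg (α := ℝ) c
  have hM0 := Nat.cast_nonneg (α := ℝ) M
  have ha : (0:ℝ) ≤ (c:ℝ)+α := by linarith
  have hb : (0:ℝ) ≤ (c:ℝ)+M+α := by linarith
  have hab : (c:ℝ)+α ≤ (c:ℝ)+M+α := by
    have : (0:ℝ) ≤ (M:ℝ) := Nat.cast_nonneg M
    linarith
  have hsub : Kint ((c:ℝ)+α) - Kint ((c:ℝ)+M+α)
      = ∫ x in Set.Ioc (0:ℝ) 1,
          ((x ^ ((c:ℝ)+α) - x ^ ((c:ℝ)+M+α)) * (1/(1-x))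
            + (x ^ ((c:ℝ)+α) - x ^ ((c:ℝ)+M+α)) / Real.log x) := by
    rw [Kint, Kint, ← MeasureTheory.integral_sub (hfs_int _ ha) (hfs_int _ hb)]
    apply MeasureTheory.integral_congr_ae
    filter_upwards with x
    rw [gfun]
    rw [div_eq_mul_one_div (x ^ ((c:ℝ)+α) - x ^ ((c:ℝ)+M+α)) (Real.log x)]
    ring
  rw [hsub, MeasureTheory.integral_add (part1 α hα c M).1 (frullani_aux _ _ ha hab).1,
    (part1 α hα c M).2, (frullani_aux _ _ ha hab).2]

lemma Kval (α : ℝ) (hα : 0 ≤ α) (γα : ℝ)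
    (hγα : Filter.Tendsto (Sa α) Filter.atTop (nhds γα)) (c : ℕ) :
    Kint ((c:ℝ)+α) = γα - Sa α c := by
  have hdiff : ∀ M : ℕ, Sa α (c+M)
      = Sa α c + Kint ((c:ℝ)+α) - Kint (((c+M:ℕ):ℝ)+α) := by
    intro M
    have h1 : Sa α (c+M) - Sa α c = ∑ i ∈ Finset.range M,
        (1 / (((c+i:ℕ):ℝ) + 1 + α)
          - Real.log ((((c+i:ℕ):ℝ) + 1 + α + 1) / (((c+i:ℕ):ℝ) + 1 + α))) := by
      rw [Sa, Sa, Finset.sum_range_add, add_sub_cancel_left]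
    have tel : ∑ i ∈ Finset.range M,
        Real.log ((((c+i:ℕ):ℝ) + 1 + α + 1) / (((c+i:ℕ):ℝ) + 1 + α))
        = Real.log ((c:ℝ)+M+α+1) - Real.log ((c:ℝ)+α+1) := by
      have hterm : ∀ i : ℕ,
          Real.log ((((c+i:ℕ):ℝ) + 1 + α + 1) / (((c+i:ℕ):ℝ) + 1 + α))
            = (fun i : ℕ => Real.log ((c:ℝ)+(i:ℝ)+α+1)) (i+1)
              - (fun i : ℕ => Real.log ((c:ℝ)+(i:ℝ)+α+1)) i := by
        intro i
        simp only
        rw [Real.log_div (by push_cast; positivity) (by push_cast; positivity)]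
        push_cast
        ring_nf
      rw [Finset.sum_congr rfl (fun i _ => hterm i), Finset.sum_range_sub
        (f := fun i : ℕ => Real.log ((c:ℝ)+(i:ℝ)+α+1))]
      simp
    have h2 := Kdiff α hα c M
    have hcast : Kint (((c+M:ℕ):ℝ)+α) = Kint ((c:ℝ)+M+α) := by push_cast; ring_nf
    have h3 : ∑ i ∈ Finset.range M, 1 / (((c+i:ℕ):ℝ) + 1 + α)
        = ∑ i ∈ Finset.range M, 1/((c:ℝ)+i+α+1) := by
      apply Finset.sum_congr rfl
      intro i _
      push_cast
      ring_nf
    rw [Finset.sum_sub_distrib, tel, h3] at h1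
    rw [hcast]
    linarith
  have t2 : Filter.Tendsto (fun M : ℕ => Kint (((c+M:ℕ):ℝ)+α)) Filter.atTop (nhds 0) := by
    apply squeeze_zero_norm (a := fun M : ℕ => 1/((M:ℝ)+1))
    · intro M
      calc ‖Kint (((c+M:ℕ):ℝ)+α)‖ ≤ 1/((((c+M:ℕ):ℝ)+α)+1) :=
            Kint_bound _ (by
              have := Nat.cast_nonneg (α := ℝ) (c+M)
              linarith)
        _ ≤ 1/((M:ℝ)+1) := by
            apply one_div_le_one_div_of_le (by
              have := Nat.cast_nonneg (α := ℝ) M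
              linarith)
            push_cast
            linarith [Nat.cast_nonneg (α := ℝ) c]
    · exact tendsto_one_div_add_atTop_nhds_zero_nat
  have t1 : Filter.Tendsto (fun M : ℕ => Sa α (c+M)) Filter.atTop (nhds γα) := by
    have h4 : (fun M : ℕ => Sa α (c+M)) = (Sa α) ∘ (fun M => M + c) := by
      funext M; simp [add_comm]
    rw [h4]
    exact hγα.comp (Filter.tendsto_add_atTop_nat c)
  have t3 : Filter.Tendsto (fun M : ℕ => Sa α (c+M)) Filter.atTop
      (nhds (Sa α c + Kint ((c:ℝ)+α) - 0)) := by
    apply Filter.Tendsto.sub tendsto_const_nhds t2 |>.congr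
    intro M
    rw [← hdiff M]
  have := tendsto_nhds_unique t1 t3
  rw [sub_zero] at this
  linarith

theorem stmt_13 (α : ℝ) (hα : 0 ≤ α)
    (γα : ℝ) (hγα : Filter.Tendsto (Sa α) Filter.atTop (nhds γα))
    (m r : ℕ) (hm : 0 < m) (hr : 0 < r) (n τ : ℕ → ℕ)
    (hn : ∀ j, 1 ≤ j → j ≤ m → 0 < n j)
    (N : ℕ) (hN : N = ∑ j ∈ Finset.Icc 1 m, n j)
    (A : ℕ → ℝ)
    (hA : ∀ k ≤ N, A k = (-1 : ℝ) ^ (k + N) * (N.choose k : ℝ) *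
      ∏ j ∈ Finset.Icc 1 m, ((r * k + n j + τ j).choose (n j) : ℝ)) :
    (∫ x in (0 : ℝ)..1,
        x ^ ((τ 0 : ℝ) + α) * (∑ k ∈ Finset.range (N + 1), A k * x ^ (r * k)) *
          (1 / (1 - x) + 1 / Real.log x)) =
      ((N.factorial : ℝ) * (r : ℝ) ^ N / ∏ j ∈ Finset.Icc 1 m, ((n j).factorial : ℝ)) * γα -
        ∑ k ∈ Finset.range (N + 1), A k * Sa α (r * k + τ 0) := by
  rw [intervalIntegral.integral_of_le zero_le_one]
  have hc0 : ∀ k : ℕ, (0:ℝ) ≤ ((r*k+τ 0 : ℕ):ℝ) + α := by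
    intro k
    have := Nat.cast_nonneg (α := ℝ) (r*k+τ 0)
    linarith
  have hae : (fun x : ℝ => x ^ ((τ 0 : ℝ) + α) *
        (∑ k ∈ Finset.range (N + 1), A k * x ^ (r * k)) * (1 / (1 - x) + 1 / Real.log x))
      =ᵐ[volume.restrict (Set.Ioc (0:ℝ) 1)]
      (fun x => ∑ k ∈ Finset.range (N+1),
        A k * (x ^ (((r*k+τ 0 : ℕ):ℝ)+α) * gfun x)) := by
    filter_upwards [ae_restrict_mem measurableSet_Ioc] with x hx
    have hx0 : 0 < x := hx.1
    have hgg : (1 / (1 - x) + 1 / Real.log x) = gfun x := rfl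
    rw [hgg]
    rw [Finset.mul_sum, Finset.sum_mul]
    apply Finset.sum_congr rfl
    intro k _
    have hsplit : x ^ (((r*k+τ 0 : ℕ):ℝ)+α) = x ^ ((τ 0:ℝ)+α) * x ^ (r*k) := by
      rw [show (((r*k+τ 0 : ℕ):ℝ)+α) = ((τ 0:ℝ)+α) + ((r*k : ℕ):ℝ) from by push_cast; ring,
        Real.rpow_add hx0, Real.rpow_natCast]
    rw [hsplit]
    ring
  rw [MeasureTheory.integral_congr_ae hae,
    MeasureTheory.integral_finset_sum _
      (fun k _ => ((hfs_int _ (hc0 k)).const_mul (A k)))]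
  have hKv : ∀ k : ℕ, (∫ x in Set.Ioc (0:ℝ) 1,
      A k * (x ^ (((r*k+τ 0 : ℕ):ℝ)+α) * gfun x)) = A k * (γα - Sa α (r*k+τ 0)) := by
    intro k
    rw [MeasureTheory.integral_const_mul]
    congr 1
    rw [show (∫ x in Set.Ioc (0:ℝ) 1, x ^ (((r*k+τ 0 : ℕ):ℝ)+α) * gfun x)
        = Kint (((r*k+τ 0 : ℕ):ℝ)+α) from rfl]
    exact Kval α hα γα hγα (r*k+τ 0)
  rw [Finset.sum_congr rfl (fun k _ => hKv k)]
  have halg : ∑ k ∈ Finset.range (N+1), A k * (γα - Sa α (r*k+τ 0))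
      = (∑ k ∈ Finset.range (N+1), A k) * γα
        - ∑ k ∈ Finset.range (N+1), A k * Sa α (r*k+τ 0) := by
    rw [Finset.sum_mul, ← Finset.sum_sub_distrib]
    apply Finset.sum_congr rfl
    intro k _
    ring
  rw [halg]
  have hAsum : ∑ k ∈ Finset.range (N+1), A k
      = (N.factorial : ℝ) * (r:ℝ)^N / ∏ j ∈ Finset.Icc 1 m, ((n j).factorial : ℝ) := by
    rw [Finset.sum_congr rfl (fun k hk => hA k (Nat.lt_succ_iff.1 (Finset.mem_range.1 hk)))]
    exact sumA m r hr n τ N hN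
  rw [hAsum]
end

section
/- Let x, t ∈ (0,1), and let τ_0, n_m, τ_m be nonnegative integers with τ_m ≤ τ_0 ≤ n_m + τ_m. Then T_{τ_m,n_m}( x ↦ x^{τ_0}/(1−(1−x)t) )(x) = (−1)^{n_m} x^{n_m+τ_m} t^{n_m+τ_m−τ_0} (t−1)^{τ_0−τ_m} / (1−(1−x)t)^{n_m+1}. -/
open Finset

/-- `T_{τ,n}(g)(x) = (1/n!) x^{n+τ} (d/dx)^n (x^{−τ} g(x))`. -/
noncomputable def Tdiff (τ : ℝ) (n : ℕ) (g : ℝ → ℝ) (x : ℝ) : ℝ :=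
  (1 / (n.factorial : ℝ)) * x ^ ((n : ℝ) + τ) *
    iteratedDeriv n (fun y => y ^ (-τ) * g y) x

lemma inv_iter (a t c : ℝ) : ∀ (m : ℕ) (y : ℝ), 0 < a + t * y →
    iteratedDeriv m (fun z => c * (a + t * z)⁻¹) y
      = c * (-t) ^ m * m.factorial * ((a + t * y) ^ (m + 1))⁻¹ := by
  intro m
  induction m with
  | zero => intro y hy; simp
  | succ m ih =>
    intro y hy
    rw [iteratedDeriv_succ]
    have hopen : IsOpen {z : ℝ | 0 < a + t * z} := by
      have : Continuous fun z : ℝ => a + t * z := by fun_prop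
      exact isOpen_lt continuous_const this
    have hev : iteratedDeriv m (fun z => c * (a + t * z)⁻¹)
        =ᶠ[nhds y] fun z => c * (-t) ^ m * m.factorial * ((a + t * z) ^ (m + 1))⁻¹ := by
      filter_upwards [hopen.mem_nhds hy] with z hz
      exact ih z hz
    rw [hev.deriv_eq]
    have h1 : HasDerivAt (fun z : ℝ => a + t * z) t y := by
      simpa using ((hasDerivAt_id y).const_mul t).const_add a
    have h2 := h1.fun_pow (m + 1)
    have h3 := h2.fun_inv (pow_ne_zero _ hy.ne')
    have h4 := h3.const_mul (c * (-t) ^ m * m.factorial)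
    rw [h4.deriv]
    have hne : a + t * y ≠ 0 := hy.ne'
    rw [Nat.factorial_succ]
    push_cast
    field_simp
    ring

lemma poly_iter (a t : ℝ) : ∀ (m k : ℕ), k ≤ m → ∀ (C : ℕ → ℝ) (y : ℝ),
    iteratedDeriv m (fun z => ∑ j ∈ range k, C j * (a + t * z) ^ j) y = 0 := by
  intro m
  induction m with
  | zero =>
    intro k hk C y
    interval_cases k
    simp
  | succ m ih =>
    intro k hk C y
    rw [iteratedDeriv_succ']
    match k with
    | 0 =>
      have h0 : (fun z : ℝ => ∑ j ∈ range 0, C j * (a + t * z) ^ j) = fun _ => (0:ℝ) := by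
        simp
      rw [h0]
      have h1 : deriv (fun _ : ℝ => (0:ℝ)) = fun _ : ℝ => (0:ℝ) := by
        funext z; simp
      rw [h1]
      have := ih 0 (Nat.zero_le m) C y
      simpa using this
    | k + 1 =>
      have hd : ∀ (j : ℕ) (z : ℝ), HasDerivAt (fun w : ℝ => C j * (a + t * w) ^ j)
          (C j * ((j : ℝ) * (a + t * z) ^ (j - 1) * t)) z := by
        intro j z
        have h1 : HasDerivAt (fun w : ℝ => a + t * w) t z := by
          simpa using ((hasDerivAt_id z).const_mul t).const_add a
        exact (h1.pow j).const_mul (C j)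
      have hder : deriv (fun z : ℝ => ∑ j ∈ range (k+1), C j * (a + t * z) ^ j)
          = fun z => ∑ j ∈ range k, (C (j+1) * ((j:ℝ)+1) * t) * (a + t * z) ^ j := by
        funext z
        have : deriv (fun z : ℝ => ∑ j ∈ range (k+1), C j * (a + t * z) ^ j) z
            = ∑ j ∈ range (k+1), C j * ((j : ℝ) * (a + t * z) ^ (j - 1) * t) :=
          (HasDerivAt.fun_sum (fun j _ => hd j z)).deriv
        rw [this, Finset.sum_range_succ']
        simp only [Nat.cast_zero, zero_mul, mul_zero, add_zero, Nat.add_sub_cancel]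
        refine Finset.sum_congr rfl fun j _ => ?_
        push_cast
        ring
      rw [hder]
      exact ih k (Nat.succ_le_succ_iff.mp hk) _ y

lemma itDW_open {s : Set ℝ} (hs : IsOpen s) {x : ℝ} (hx : x ∈ s) (n : ℕ) (f : ℝ → ℝ) :
    iteratedDerivWithin n f s x = iteratedDeriv n f x := by
  rw [iteratedDerivWithin_eq_iteratedFDerivWithin, iteratedDeriv_eq_iteratedFDeriv,
    iteratedFDerivWithin_of_isOpen n hs hx]

theorem stmt_17 (x t : ℝ) (hx : x ∈ Set.Ioo (0 : ℝ) 1) (ht : t ∈ Set.Ioo (0 : ℝ) 1)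
    (τ₀ nm τm : ℕ) (h1 : τm ≤ τ₀) (h2 : τ₀ ≤ nm + τm) :
    Tdiff (τm : ℝ) nm (fun y => y ^ τ₀ / (1 - (1 - y) * t)) x =
      (-1 : ℝ) ^ nm *
        (x ^ (nm + τm) * t ^ (nm + τm - τ₀) * (t - 1) ^ (τ₀ - τm)) /
        (1 - (1 - x) * t) ^ (nm + 1) := by
  obtain ⟨hx0, hx1⟩ := hx
  obtain ⟨ht0, ht1⟩ := ht
  set k := τ₀ - τm with hkdef
  have hk_le : k ≤ nm := by omega
  set a : ℝ := 1 - t with hadef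
  have ha : 0 < a := by rw [hadef]; linarith
  have htne : t ≠ 0 := ne_of_gt ht0
  have htk : (t:ℝ) ^ k ≠ 0 := pow_ne_zero _ htne
  set C : ℕ → ℝ := fun j => (Nat.choose k (j+1) : ℝ) * (-a) ^ (k-1-j) / t ^ k with hC
  set c : ℝ := (-a) ^ k / t ^ k with hc
  have hpos : ∀ z : ℝ, 0 < z → 0 < a + t * z :=
    fun z hz => add_pos ha (mul_pos ht0 hz)
  have hiden : ∀ z : ℝ, 0 < z →
      z ^ (-(τm:ℝ)) * (z ^ τ₀ / (1 - (1 - z) * t))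
        = (∑ j ∈ range k, C j * (a + t * z) ^ j) + c * (a + t * z)⁻¹ := by
    intro z hz
    have hD : 0 < a + t * z := hpos z hz
    have hD' : (1 - (1 - z) * t) = a + t * z := by rw [hadef]; ring
    have hrl : z ^ (-(τm:ℝ)) * (z:ℝ) ^ τ₀ = z ^ k := by
      rw [← Real.rpow_natCast z τ₀, ← Real.rpow_natCast z k, ← Real.rpow_add hz]
      congr 1
      rw [hkdef]
      push_cast [Nat.cast_sub h1]
      ring
    have key : (t * z) ^ k
        = (∑ j ∈ range k, (k.choose (j+1):ℝ) * (-a) ^ (k-1-j) * (a + t * z) ^ (j+1))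
          + (-a) ^ k := by
      have h0 : t * z = (a + t * z) + (-a) := by ring
      rw [h0, add_pow, Finset.sum_range_succ']
      simp only [pow_zero, one_mul, Nat.sub_zero, Nat.choose_zero_right, Nat.cast_one, mul_one]
      congr 1
      refine Finset.sum_congr rfl fun j hj => ?_
      have : k - (j+1) = k - 1 - j := by omega
      rw [this]
      ring
    have hzk : z ^ k = (∑ j ∈ range k, C j * (a + t * z) ^ j) * (a + t * z) + c := by
      calc z ^ k = (t * z) ^ k / t ^ k := by rw [mul_pow]; field_simp
        _ = ((∑ j ∈ range k, (k.choose (j+1):ℝ) * (-a) ^ (k-1-j) * (a + t * z) ^ (j+1))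
              + (-a) ^ k) / t ^ k := by rw [key]
        _ = (∑ j ∈ range k, C j * (a + t * z) ^ (j+1)) + c := by
              rw [add_div, Finset.sum_div, hc]
              congr 1
              refine Finset.sum_congr rfl fun j _ => ?_
              rw [hC]
              ring
        _ = (∑ j ∈ range k, C j * (a + t * z) ^ j) * (a + t * z) + c := by
              rw [Finset.sum_mul]
              congr 1
              refine Finset.sum_congr rfl fun j _ => ?_
              ring
    rw [hD', mul_div_assoc' , hrl, div_eq_iff hD.ne', add_mul,
      mul_assoc, inv_mul_cancel₀ hD.ne', mul_one]
    exact hzk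
  unfold Tdiff
  have hev : (fun y : ℝ => y ^ (-(τm:ℝ)) * (y ^ τ₀ / (1 - (1 - y) * t)))
      =ᶠ[nhds x] (fun z => (∑ j ∈ range k, C j * (a + t * z) ^ j) + c * (a + t * z)⁻¹) := by
    filter_upwards [Ioi_mem_nhds hx0] with z hz
    exact hiden z hz
  rw [Filter.EventuallyEq.iteratedDeriv_eq nm hev]
  have hxm : x ∈ Set.Ioi (0:ℝ) := hx0
  have hfP : ContDiffOn ℝ nm (fun z : ℝ => ∑ j ∈ range k, C j * (a + t * z) ^ j)
      (Set.Ioi 0) := by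
    apply ContDiff.contDiffOn
    apply ContDiff.sum
    intro j _
    fun_prop
  have hfQ : ContDiffOn ℝ nm (fun z : ℝ => c * (a + t * z)⁻¹) (Set.Ioi 0) := by
    apply ContDiffOn.mul contDiffOn_const
    apply ContDiffOn.inv
    · exact (by fun_prop : ContDiff ℝ nm fun z : ℝ => a + t * z).contDiffOn
    · intro z hz
      exact (hpos z hz).ne'
  have hsplit : iteratedDeriv nm
      (fun z => (∑ j ∈ range k, C j * (a + t * z) ^ j) + c * (a + t * z)⁻¹) x
      = iteratedDeriv nm (fun z => ∑ j ∈ range k, C j * (a + t * z) ^ j) x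
        + iteratedDeriv nm (fun z => c * (a + t * z)⁻¹) x := by
    rw [← itDW_open isOpen_Ioi hxm, ← itDW_open isOpen_Ioi hxm, ← itDW_open isOpen_Ioi hxm]
    exact iteratedDerivWithin_add hxm isOpen_Ioi.uniqueDiffOn (hfP x hxm) (hfQ x hxm)
  rw [hsplit, poly_iter a t nm k hk_le C x, inv_iter a t c nm x (hpos x hx0), zero_add]
  have hxr : x ^ ((nm:ℝ) + (τm:ℝ)) = x ^ (nm + τm) := by
    rw [← Real.rpow_natCast x (nm + τm)]
    congr 1
    push_cast
    ring
  have hDx : 0 < a + t * x := hpos x hx0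
  have hD'' : (1 - (1 - x) * t) = a + t * x := by rw [hadef]; ring
  have hma : -a = t - 1 := by rw [hadef]; ring
  have hsub : nm + τm - τ₀ = nm - k := by omega
  have htp : t ^ nm = t ^ (nm - k) * t ^ k := by
    rw [← pow_add]
    congr 1
    omega
  rw [hxr, hD'', hsub, ← hma, hc]
  have hfac : ((nm.factorial : ℝ)) ≠ 0 := Nat.cast_ne_zero.mpr nm.factorial_ne_zero
  rw [neg_pow t nm, htp]
  field_simp
end

section
/- Let m ≥ 1 and let n_1, …, n_m be positive integers, τ_0, τ_1, …, τ_m nonnegative integers with 0 ≤ τ_0 − τ_m ≤ n_m and n_m + τ_m ≥ n_j + τ_j for j = 1, …, m−1. Then for x, t ∈ (0,1): [ T_{τ_{m−1},n_{m−1}} ∘ ⋯ ∘ T_{τ_1,n_1} ∘ T_{τ_m,n_m} ]( x ↦ x^{τ_0}/(1−(1−x)t) )(x) = (−1)^{n_m} ∏_{j=1}^{m} C(n_m+τ_m−τ_j, n_j) · [ x^{n_m+τ_m} t^{n_m+τ_m−τ_0} (t−1)^{τ_0−τ_m} / (1−t+xt)^{n_m+1} ] · Q_m( xt/(1−t+xt)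 ). -/
open Finset

/-- The composition `T_{τ_{m−1},n_{m−1}} ∘ ⋯ ∘ T_{τ_1,n_1} ∘ T_{τ_m,n_m}`
(parameters indexed from 1). -/
noncomputable def TdiffChain (m : ℕ) (n τ : ℕ → ℕ) (g : ℝ → ℝ) : ℝ → ℝ :=
  List.foldl (fun h j => Tdiff (τ j : ℝ) (n j) h) (Tdiff (τ m : ℝ) (n m) g)
    (List.range' 1 (m - 1))

/-- The polynomial `Q_m(y)` (with parameters `n_1,…,n_m`, `τ_1,…,τ_m`, indexed from 1):
`Q_1 ≡ 1`, and for `m ≥ 2`,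
`Q_m(y) = ∑_{k_1=0}^{n_1} ⋯ ∑_{k_{m−1}=0}^{n_{m−1}} ∏_{j=1}^{m−1}
  (−n_j)_{k_j} (1+n_m+τ_m−τ_{j+1})_{k_1+⋯+k_j} /
    (k_j! (1+n_m+τ_m−n_j−τ_j)_{k_1+⋯+k_j}) · y^{k_j}`. -/
noncomputable def Q (m : ℕ) (n τ : ℕ → ℕ) (y : ℝ) : ℝ :=
  if m = 1 then 1
  else
    ∑ k ∈ Fintype.piFinset (fun j : Fin (m - 1) => Finset.range (n (j.1 + 1) + 1)),
      ∏ j : Fin (m - 1),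
        ((ascPochhammer ℝ (k j)).eval (-(n (j.1 + 1) : ℝ)) *
            (ascPochhammer ℝ
                (∑ i ∈ Finset.univ.filter fun i : Fin (m - 1) => i ≤ j, k i)).eval
              ((1 : ℝ) + n m + τ m - τ (j.1 + 2)) /
            (((k j).factorial : ℝ) *
              (ascPochhammer ℝ
                  (∑ i ∈ Finset.univ.filter fun i : Fin (m - 1) => i ≤ j, k i)).eval
                ((1 : ℝ) + n m + τ m - n (j.1 + 1) - τ (j.1 + 1))) *
          y ^ k j)

open Set

noncomputable def dcoef (t : ℝ) (nn ii P Qq : ℕ) : ℝ :=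
  (nn.choose ii) * (descPochhammer ℝ ii).eval (P:ℝ) * (-t)^(nn-ii) *
    (ascPochhammer ℝ (nn-ii)).eval (Qq:ℝ)

noncomputable def stepW (M n' a K l : ℕ) : ℝ :=
  (n'.choose (n'-l) : ℝ) * (descPochhammer ℝ (n'-l)).eval ((a + K : ℕ) : ℝ) * (-1)^l *
    (ascPochhammer ℝ l).eval ((M + K : ℕ) : ℝ) / n'.factorial

def extf (j : ℕ) (k : Fin j → ℕ) : ℕ → ℕ := fun a => if h : a < j then k ⟨a, h⟩ else 0

lemma aux_dcoef_zero (t : ℝ) (P Qq : ℕ) : dcoef t 0 0 P Qq = 1 := by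
  simp [dcoef]

lemma aux_congr {f g : ℝ → ℝ} {s : Set ℝ} (hs : IsOpen s) (h : Set.EqOn f g s) (n : ℕ) :
    ∀ y ∈ s, iteratedDeriv n f y = iteratedDeriv n g y := by
  induction n with
  | zero => intro y hy; simpa using h hy
  | succ n ih =>
    intro y hy
    rw [iteratedDeriv_succ, iteratedDeriv_succ]
    exact Filter.EventuallyEq.deriv_eq (Filter.eventuallyEq_of_mem (hs.mem_nhds hy) ih)

lemma aux_ascP_fact (a K : ℕ) :
    (ascPochhammer ℝ K).eval ((a : ℝ) + 1) = (a + K).factorial / a.factorial := by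
  induction K with
  | zero => simp [div_self (by positivity : (a.factorial:ℝ) ≠ 0)]
  | succ K ih =>
    rw [ascPochhammer_succ_eval, ih]
    have h : ((a + (K+1)).factorial : ℝ) = (a + K).factorial * ((a:ℝ) + 1 + K) := by
      have h0 : a + (K + 1) = (a + K) + 1 := by ring
      rw [h0, Nat.factorial_succ, Nat.cast_mul]
      push_cast; ring
    rw [h]
    field_simp

lemma aux_descP_fact {i p : ℕ} (h : i ≤ p) :
    (descPochhammer ℝ i).eval (p : ℝ) = p.factorial / (p - i).factorial := by
  induction i with
  | zero => simp [div_self (by positivity : (p.factorial:ℝ) ≠ 0)]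
  | succ i ih =>
    have hi : i ≤ p := by omega
    rw [descPochhammer_succ_eval, ih hi]
    have h2 : (p - i) = (p - (i+1)) + 1 := by omega
    have h3 : ((p - i).factorial : ℝ) = (p - (i+1)).factorial * ((p:ℝ) - i) := by
      rw [h2, Nat.factorial_succ, Nat.cast_mul]
      have hc : ((p - (i+1) + 1 : ℕ) : ℝ) = (p:ℝ) - i := by
        have := Nat.cast_sub (by omega : i + 1 ≤ p) (R := ℝ); push_cast at this ⊢; linarith
      rw [hc]; ring
    rw [h3]
    have hne : ((p - (i+1)).factorial : ℝ) ≠ 0 := by positivity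
    have hne2 : (p:ℝ) - i ≠ 0 := by
      have : (i:ℝ) < p := by exact_mod_cast lt_of_lt_of_le (Nat.lt_succ_self i) h
      linarith
    field_simp

lemma aux_ascP_neg {k nn : ℕ} (h : k ≤ nn) :
    (ascPochhammer ℝ k).eval (-(nn : ℝ)) = (-1)^k * (nn.choose k) * k.factorial := by
  have key : ∀ k, k ≤ nn → (ascPochhammer ℝ k).eval (-(nn : ℝ)) = (-1)^k * (nn.factorial / (nn - k).factorial) := by
    intro k hk
    induction k with
    | zero => simp [div_self (by positivity : (nn.factorial:ℝ) ≠ 0)]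
    | succ k ih =>
      have hk' : k ≤ nn := by omega
      rw [ascPochhammer_succ_eval, ih hk']
      have h2 : (nn - k) = (nn - (k+1)) + 1 := by omega
      have h3 : ((nn - k).factorial : ℝ) = (nn - (k+1)).factorial * ((nn:ℝ) - k) := by
        rw [h2, Nat.factorial_succ, Nat.cast_mul]
        have hc : ((nn - (k+1) + 1 : ℕ) : ℝ) = (nn:ℝ) - k := by
          have := Nat.cast_sub (by omega : k + 1 ≤ nn) (R := ℝ); push_cast at this ⊢; linarith
        rw [hc]; ring
      rw [h3, pow_succ]
      have hne : ((nn - (k+1)).factorial : ℝ) ≠ 0 := by positivity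
      have hne2 : (nn:ℝ) - k ≠ 0 := by
        have : (k:ℝ) < nn := by exact_mod_cast hk
        linarith
      field_simp
      ring
  rw [key k h, Nat.cast_choose ℝ h]
  have h1 : ((nn-k).factorial : ℝ) ≠ 0 := by positivity
  have h2 : (k.factorial : ℝ) ≠ 0 := by positivity
  field_simp

lemma aux_ascP_pos {z : ℝ} (hz : 0 < z) (K : ℕ) : 0 < (ascPochhammer ℝ K).eval z := by
  induction K with
  | zero => simp
  | succ K ih =>
    rw [ascPochhammer_succ_eval]
    have : (0:ℝ) < z + K := by positivity
    positivity

lemma aux_hasDerivAt_L (t y : ℝ) : HasDerivAt (fun z : ℝ => 1 - t + z * t) t y := by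
  simpa using ((hasDerivAt_id y).mul_const t).const_add (1 - t)

lemma aux_hasDerivAt_wpow {t y : ℝ} (hv : 1 - t + y * t ≠ 0) {b : ℕ} (hb : 1 ≤ b) :
    HasDerivAt (fun z : ℝ => ((1 - t + z * t)⁻¹) ^ b)
      (-(b:ℝ) * t * ((1 - t + y * t)⁻¹) ^ (b + 1)) y := by
  have hw : HasDerivAt (fun z : ℝ => (1 - t + z * t)⁻¹)
      (-t / (1 - t + y * t) ^ 2) y := (aux_hasDerivAt_L t y).inv hv
  have := hw.pow b
  refine this.congr_deriv ?_
  obtain ⟨b', rfl⟩ := Nat.exists_eq_add_of_le hb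
  have h2 : 1 + b' - 1 = b' := by omega
  rw [h2]
  rw [div_eq_mul_inv]
  rw [show ((1 - t + y*t)^2)⁻¹ = ((1-t+y*t)⁻¹)^2 by rw [inv_pow]]
  rw [show (1 + b') + 1 = b' + 2 by omega]
  rw [pow_add]
  ring

lemma aux_hasDerivAt_atom {t y : ℝ} (hv : 1 - t + y * t ≠ 0) (a : ℕ) {b : ℕ} (hb : 1 ≤ b) :
    HasDerivAt (fun z : ℝ => z ^ a * ((1 - t + z * t)⁻¹) ^ b)
      ((a:ℝ) * y ^ (a-1) * ((1 - t + y * t)⁻¹) ^ b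
        - (b:ℝ) * t * y ^ a * ((1 - t + y * t)⁻¹) ^ (b + 1)) y := by
  have := (hasDerivAt_pow a y).mul (aux_hasDerivAt_wpow hv hb)
  refine this.congr_deriv ?_
  ring

lemma aux_step_sum (t y W : ℝ) (nn P Qq : ℕ) (hP : nn + 1 ≤ P) :
    ∑ ii ∈ range (nn+1), dcoef t nn ii P Qq *
        ((↑(P - ii)) * y^(P-ii-1) * W^(Qq+(nn-ii))
          - (↑(Qq+(nn-ii)))*t*y^(P-ii)*W^(Qq+(nn-ii)+1))
    = ∑ ii ∈ range (nn+2), dcoef t (nn+1) ii P Qq * (y^(P-ii) * W^(Qq+((nn+1)-ii))) := by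
  simp only [mul_sub]
  rw [Finset.sum_sub_distrib]
  have hX : ∀ ii ∈ range (nn+2),
      dcoef t (nn+1) ii P Qq * (y^(P-ii) * W^(Qq+((nn+1)-ii)))
      = (if ii = 0 then 0 else
          (nn.choose (ii-1) : ℝ) * (descPochhammer ℝ ii).eval (P:ℝ) * (-t)^(nn+1-ii) *
            (ascPochhammer ℝ (nn+1-ii)).eval (Qq:ℝ) * (y^(P-ii) * W^(Qq+(nn+1-ii))))
        + ((nn.choose ii : ℝ) * (descPochhammer ℝ ii).eval (P:ℝ) * (-t)^(nn+1-ii) *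
            (ascPochhammer ℝ (nn+1-ii)).eval (Qq:ℝ) * (y^(P-ii) * W^(Qq+(nn+1-ii)))) := by
    intro ii _
    rcases ii with _ | k
    · simp [dcoef]
    · simp only [if_neg (Nat.succ_ne_zero k)]
      rw [dcoef, Nat.choose_succ_succ' nn k]
      push_cast
      ring_nf
  rw [Finset.sum_congr rfl hX, Finset.sum_add_distrib]
  have hXtop : ((nn.choose (nn+1) : ℝ) * (descPochhammer ℝ (nn+1)).eval (P:ℝ) * (-t)^(nn+1-(nn+1)) *
      (ascPochhammer ℝ (nn+1-(nn+1))).eval (Qq:ℝ) * (y^(P-(nn+1)) * W^(Qq+(nn+1-(nn+1))))) = 0 := by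
    rw [Nat.choose_succ_self]; simp
  -- second sum (X part) equals minus of B part
  have hB : ∑ ii ∈ range (nn+2),
      ((nn.choose ii : ℝ) * (descPochhammer ℝ ii).eval (P:ℝ) * (-t)^(nn+1-ii) *
        (ascPochhammer ℝ (nn+1-ii)).eval (Qq:ℝ) * (y^(P-ii) * W^(Qq+(nn+1-ii))))
      = ∑ ii ∈ range (nn+1), -(dcoef t nn ii P Qq *
          ((↑(Qq+(nn-ii)))*t*y^(P-ii)*W^(Qq+(nn-ii)+1))) := by
    rw [Finset.sum_range_succ, hXtop, add_zero]
    refine Finset.sum_congr rfl ?_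
    intro ii hii
    have hii' : ii ≤ nn := by simp at hii; omega
    rw [show nn + 1 - ii = (nn - ii) + 1 by omega]
    rw [ascPochhammer_succ_eval, pow_succ, dcoef]
    push_cast [Nat.cast_sub hii']
    rw [show Qq + (nn - ii + 1) = Qq + (nn - ii) + 1 by omega]
    ring
  -- first sum (Y part) equals A part
  have hY : ∑ ii ∈ range (nn+2),
      (if ii = 0 then (0:ℝ) else
        (nn.choose (ii-1) : ℝ) * (descPochhammer ℝ ii).eval (P:ℝ) * (-t)^(nn+1-ii) *
          (ascPochhammer ℝ (nn+1-ii)).eval (Qq:ℝ) * (y^(P-ii) * W^(Qq+(nn+1-ii))))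
      = ∑ ii ∈ range (nn+1), dcoef t nn ii P Qq *
          ((↑(P - ii)) * y^(P-ii-1) * W^(Qq+(nn-ii))) := by
    rw [Finset.sum_range_succ']
    simp only [if_neg (Nat.succ_ne_zero _), eq_self_iff_true, if_true, add_zero]
    refine Finset.sum_congr rfl ?_
    intro ii hii
    have hii' : ii ≤ nn := by simp at hii; omega
    have hiP : ii ≤ P := by omega
    rw [show ii + 1 - 1 = ii by omega]
    rw [show nn + 1 - (ii+1) = nn - ii by omega]
    rw [descPochhammer_succ_eval, dcoef]
    rw [show P - (ii+1) = P - ii - 1 by omega]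
    rw [Nat.cast_sub hiP]
    push_cast
    ring
  rw [hB, hY, Finset.sum_neg_distrib]
  ring

lemma aux_pos {t : ℝ} (ht0 : 0 < t) (ht1 : t < 1) {y : ℝ} (hy : y ∈ Ioi (0:ℝ)) :
    0 < 1 - t + y * t := by
  have : 0 < y := hy
  nlinarith

lemma aux_iter_sum {t : ℝ} (ht0 : 0 < t) (ht1 : t < 1) {ι : Type} (S : Finset ι)
    (c : ι → ℝ) (p q : ι → ℕ) (hq : ∀ i ∈ S, 1 ≤ q i) :
    ∀ nn, (∀ i ∈ S, nn ≤ p i) → ∀ y ∈ Ioi (0:ℝ),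
    iteratedDeriv nn (fun z => ∑ i ∈ S, c i * (z ^ (p i) * ((1-t+z*t)⁻¹) ^ (q i))) y
    = ∑ i ∈ S, c i * ∑ ii ∈ range (nn+1), dcoef t nn ii (p i) (q i) *
        (y ^ (p i - ii) * ((1-t+y*t)⁻¹) ^ (q i + (nn - ii))) := by
  intro nn
  induction nn with
  | zero =>
    intro _ y hy
    rw [iteratedDeriv_zero]
    refine Finset.sum_congr rfl fun i hi => ?_
    rw [Finset.sum_range_one, aux_dcoef_zero]
    simp
  | succ nn ih =>
    intro hp y hy
    have hp' : ∀ i ∈ S, nn ≤ p i := fun i hi => le_trans (Nat.le_succ nn) (hp i hi)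
    rw [iteratedDeriv_succ]
    have hev : deriv (iteratedDeriv nn
        (fun z => ∑ i ∈ S, c i * (z ^ (p i) * ((1-t+z*t)⁻¹) ^ (q i)))) y
        = deriv (fun y => ∑ i ∈ S, c i * ∑ ii ∈ range (nn+1), dcoef t nn ii (p i) (q i) *
            (y ^ (p i - ii) * ((1-t+y*t)⁻¹) ^ (q i + (nn - ii)))) y := by
      apply Filter.EventuallyEq.deriv_eq
      exact Filter.eventuallyEq_of_mem (isOpen_Ioi.mem_nhds hy) (ih hp')
    rw [hev]
    have hv : 1 - t + y * t ≠ 0 := ne_of_gt (aux_pos ht0 ht1 hy)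
    have hD : HasDerivAt (fun y => ∑ i ∈ S, c i * ∑ ii ∈ range (nn+1),
          dcoef t nn ii (p i) (q i) *
            (y ^ (p i - ii) * ((1-t+y*t)⁻¹) ^ (q i + (nn - ii))))
        (∑ i ∈ S, c i * ∑ ii ∈ range (nn+1), dcoef t nn ii (p i) (q i) *
          ((↑(p i - ii)) * y^(p i - ii - 1) * ((1-t+y*t)⁻¹)^(q i + (nn-ii))
            - (↑(q i + (nn-ii)))*t*y^(p i - ii)*((1-t+y*t)⁻¹)^(q i + (nn-ii)+1))) y := by
      apply HasDerivAt.fun_sum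
      intro i hi
      apply HasDerivAt.const_mul
      apply HasDerivAt.fun_sum
      intro ii hii
      apply HasDerivAt.const_mul
      exact aux_hasDerivAt_atom hv (p i - ii) (le_trans (hq i hi) (Nat.le_add_right _ _))
    rw [hD.deriv]
    refine Finset.sum_congr rfl fun i hi => ?_
    congr 1
    exact aux_step_sum t y _ nn (p i) (q i) (hp i hi)

open Polynomial


lemma aux_iter_poly {t : ℝ} (ht0 : 0 < t) (ht1 : t < 1) (P : ℝ[X]) (e : ℝ) :
    ∀ nn, ∀ y ∈ Ioi (0:ℝ),
    iteratedDeriv nn (fun z => P.eval z + e * (1-t+z*t)⁻¹) y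
    = (Polynomial.derivative^[nn] P).eval y
      + e * (-t)^nn * nn.factorial * ((1-t+y*t)⁻¹)^(nn+1) := by
  intro nn
  induction nn with
  | zero => intro y hy; simp
  | succ nn ih =>
    intro y hy
    rw [iteratedDeriv_succ]
    have hev : deriv (iteratedDeriv nn (fun z => P.eval z + e * (1-t+z*t)⁻¹)) y
        = deriv (fun y => (Polynomial.derivative^[nn] P).eval y
            + e * (-t)^nn * nn.factorial * ((1-t+y*t)⁻¹)^(nn+1)) y := by
      apply Filter.EventuallyEq.deriv_eq
      exact Filter.eventuallyEq_of_mem (isOpen_Ioi.mem_nhds hy) ih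
    rw [hev]
    have hv : 1 - t + y * t ≠ 0 := ne_of_gt (aux_pos ht0 ht1 hy)
    have hD : HasDerivAt (fun y => (Polynomial.derivative^[nn] P).eval y
        + e * (-t)^nn * nn.factorial * ((1-t+y*t)⁻¹)^(nn+1))
        ((Polynomial.derivative^[nn+1] P).eval y
          + e * (-t)^(nn+1) * (nn+1).factorial * ((1-t+y*t)⁻¹)^(nn+2)) y := by
      have h1 : HasDerivAt (fun y => (Polynomial.derivative^[nn] P).eval y)
          ((Polynomial.derivative^[nn+1] P).eval y) y := by
        rw [Function.iterate_succ_apply']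
        exact Polynomial.hasDerivAt _ y
      have h2 := (aux_hasDerivAt_wpow hv (Nat.succ_le_succ (Nat.zero_le nn))).const_mul
          (e * (-t)^nn * nn.factorial)
      have := h1.add h2
      refine this.congr_deriv ?_
      rw [Nat.factorial_succ]
      push_cast
      rw [show nn + 1 + 1 = nn + 2 by omega]
      ring
    rw [hD.deriv]

lemma aux_partial_frac {t : ℝ} (ht0 : 0 < t) (ht1 : t < 1) (a : ℕ) :
    Set.EqOn (fun z : ℝ => z ^ a * (1-t+z*t)⁻¹)
      (fun z => (∑ i ∈ range a, (t-1)^(a-1-i) / t^(a-i) * z ^ i)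
        + (t-1)^a / t^a * (1-t+z*t)⁻¹) (Ioi 0) := by
  intro z hz
  have hv : (0:ℝ) < 1 - t + z * t := aux_pos ht0 ht1 hz
  have hv' : 1 - t + z * t ≠ 0 := ne_of_gt hv
  have ht : t ≠ 0 := ne_of_gt ht0
  have key : (1-t+z*t) * (∑ i ∈ range a, (t-1)^(a-1-i) / t^(a-i) * z ^ i)
      = z ^ a - (t-1)^a / t^a := by
    have telescope := Finset.sum_range_sub (fun i => z^i * (t-1)^(a-i) / t^(a-i)) a
    rw [Finset.mul_sum]
    rw [show z ^ a - (t-1)^a/t^a = z^a * (t-1)^(a-a)/t^(a-a) - z^0*(t-1)^(a-0)/t^(a-0) by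
      simp]
    rw [← telescope]
    refine Finset.sum_congr rfl fun i hi => ?_
    have hia : i < a := Finset.mem_range.mp hi
    rw [show a - (i+1) = a - 1 - i by omega]
    rw [show a - i = (a - 1 - i) + 1 by omega]
    rw [pow_succ, pow_succ]
    field_simp
    ring
  simp only
  have hs : (∑ i ∈ range a, (t-1)^(a-1-i) / t^(a-i) * z ^ i)
      = (z ^ a - (t-1)^a/t^a) * (1-t+z*t)⁻¹ := by
    rw [← key, mul_comm (1-t+z*t), mul_inv_cancel_right₀ hv']
  rw [hs]
  field_simp
  ring

lemma aux_base {t : ℝ} (ht0 : 0 < t) (ht1 : t < 1) {a nn : ℕ} (ha : a ≤ nn) (h1 : 1 ≤ nn) :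
    ∀ y ∈ Ioi (0:ℝ),
    iteratedDeriv nn (fun z => z ^ a * (1-t+z*t)⁻¹) y
    = (-1)^nn * nn.factorial * (t-1)^a * t^(nn-a) * ((1-t+y*t)⁻¹)^(nn+1) := by
  intro y hy
  have ht : t ≠ 0 := ne_of_gt ht0
  set P : ℝ[X] := ∑ i ∈ range a, Polynomial.C ((t-1)^(a-1-i) / t^(a-i)) * Polynomial.X ^ i with hP
  have heq : Set.EqOn (fun z : ℝ => z ^ a * (1-t+z*t)⁻¹)
      (fun z => P.eval z + (t-1)^a/t^a * (1-t+z*t)⁻¹) (Ioi 0) := by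
    intro z hz
    have := aux_partial_frac ht0 ht1 a hz
    simpa [hP, Polynomial.eval_finset_sum] using this
  rw [aux_congr isOpen_Ioi heq nn y hy]
  rw [aux_iter_poly ht0 ht1 P _ nn y hy]
  have hdeg : P.natDegree < nn := by
    have hle : P.natDegree ≤ a - 1 := by
      apply Polynomial.natDegree_sum_le_of_forall_le
      intro i hi
      refine le_trans (Polynomial.natDegree_C_mul_le _ _) ?_
      rw [Polynomial.natDegree_X_pow]
      have := Finset.mem_range.mp hi
      omega
    omega
  rw [Polynomial.iterate_derivative_eq_zero hdeg]
  have hcast : ((t-1)^a/t^a) * (-t)^nn = (-1)^nn * (t-1)^a * t^(nn-a) := by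
    rw [neg_pow]
    rw [show t^nn = t^a * t^(nn-a) by rw [← pow_add]; congr 1; omega]
    field_simp
  simp only [Polynomial.eval_zero, zero_add]
  calc (t-1)^a/t^a * (-t)^nn * nn.factorial * ((1-t+y*t)⁻¹)^(nn+1)
      = ((t-1)^a/t^a * (-t)^nn) * nn.factorial * ((1-t+y*t)⁻¹)^(nn+1) := by ring
    _ = (-1)^nn * nn.factorial * (t-1)^a * t^(nn-a) * ((1-t+y*t)⁻¹)^(nn+1) := by
        rw [hcast]; ring

lemma aux_PF {M n' a K l : ℕ} (hl : l ≤ n') (hn : n' ≤ a) :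
    stepW M n' a K l
    = (a.choose n' : ℝ) * ((-1)^l * (n'.choose l : ℝ)) *
        ((ascPochhammer ℝ K).eval ((a:ℝ)+1) * (ascPochhammer ℝ l).eval ((M + K : ℕ) : ℝ))
        / (ascPochhammer ℝ (K+l)).eval (((a - n' : ℕ) : ℝ)+1) := by
  rw [stepW, aux_descP_fact (by omega : n' - l ≤ a + K), aux_ascP_fact, aux_ascP_fact]
  rw [Nat.cast_choose ℝ (by omega : n' - l ≤ n'), Nat.cast_choose ℝ hn, Nat.cast_choose ℝ hl]
  rw [show n' - (n' - l) = l by omega]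
  rw [show a + K - (n' - l) = a - n' + (K + l) by omega]
  have e1 : ((a - n' + (K+l)).factorial : ℝ) ≠ 0 := by positivity
  have e2 : ((a-n').factorial : ℝ) ≠ 0 := by positivity
  have e3 : ((n'-l).factorial : ℝ) ≠ 0 := by positivity
  have e4 : (l.factorial : ℝ) ≠ 0 := by positivity
  have e5 : (n'.factorial : ℝ) ≠ 0 := by positivity
  have e6 : (a.factorial : ℝ) ≠ 0 := by positivity
  field_simp

lemma aux_ascP_add (x : ℝ) (n m : ℕ) :
    (ascPochhammer ℝ (n+m)).eval x
    = (ascPochhammer ℝ n).eval x * (ascPochhammer ℝ m).eval (x + n) := by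
  have h := congrArg (Polynomial.eval x) (ascPochhammer_mul ℝ n m)
  simp only [Polynomial.eval_mul, Polynomial.eval_comp, Polynomial.eval_add,
    Polynomial.eval_X, Polynomial.eval_natCast] at h
  exact h.symm

lemma aux_tel (c : ℝ) (kk : ℕ → ℕ) (r : ℕ) :
    ∏ i ∈ range r, (ascPochhammer ℝ (kk i)).eval (c + ((∑ a ∈ range i, kk a : ℕ) : ℝ))
    = (ascPochhammer ℝ (∑ a ∈ range r, kk a)).eval c := by
  induction r with
  | zero => simp
  | succ r ih =>
    rw [Finset.prod_range_succ, ih, Finset.sum_range_succ, aux_ascP_add]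

lemma aux_split5 (r : ℕ) (f1 f2 f3 f4 f5 : ℕ → ℝ) :
    ∏ i ∈ range r, (f1 i * f2 i * (f3 i * f4 i) / f5 i)
    = (∏ i ∈ range r, f1 i) * (∏ i ∈ range r, f2 i) *
        ((∏ i ∈ range r, f3 i) * (∏ i ∈ range r, f4 i)) / (∏ i ∈ range r, f5 i) := by
  rw [Finset.prod_div_distrib, Finset.prod_mul_distrib, Finset.prod_mul_distrib,
    Finset.prod_mul_distrib]

lemma aux_split3 (r : ℕ) (f2 f5 f6 : ℕ → ℝ) :
    ∏ i ∈ range r, (f2 i * f6 i / f5 i)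
    = (∏ i ∈ range r, f2 i) * (∏ i ∈ range r, f6 i) / (∏ i ∈ range r, f5 i) := by
  rw [Finset.prod_div_distrib, Finset.prod_mul_distrib]

lemma aux_tuple (n τ : ℕ → ℕ) (m : ℕ) (hm : 1 ≤ m) (kk : ℕ → ℕ)
    (hkk : ∀ i, i < m - 1 → kk i ≤ n (i+1))
    (hmax : ∀ j, 1 ≤ j → j ≤ m - 1 → n j + τ j ≤ n m + τ m) :
    ∏ i ∈ range (m-1), stepW (n m + 1) (n (i+1)) (n m + τ m - τ (i+1))
        (∑ a ∈ range i, kk a) (kk i)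
    = (∏ j ∈ Icc 1 m, ((n m + τ m - τ j).choose (n j) : ℝ)) *
      ∏ i ∈ range (m-1),
        ((ascPochhammer ℝ (kk i)).eval (-(n (i+1) : ℝ)) *
          (ascPochhammer ℝ (∑ a ∈ range (i+1), kk a)).eval ((1:ℝ) + n m + τ m - τ (i+2)) /
          (((kk i).factorial : ℝ) *
            (ascPochhammer ℝ (∑ a ∈ range (i+1), kk a)).eval
              ((1:ℝ) + n m + τ m - n (i+1) - τ (i+1)))) := by
  have hτle : ∀ j, 1 ≤ j → j ≤ m → τ j ≤ n m + τ m := by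
    intro j h1 h2
    rcases eq_or_lt_of_le h2 with rfl | h3
    · omega
    · have := hmax j h1 (by omega); omega
  set N := n m + τ m with hN
  set K : ℕ → ℕ := fun i => ∑ a ∈ range i, kk a with hK
  set g : ℕ → ℝ := fun i => (ascPochhammer ℝ (K i)).eval (((N - τ (i+1) : ℕ) : ℝ) + 1) with hg
  set E : ℕ → ℝ := fun i => (ascPochhammer ℝ (K i + kk i)).eval
      (((N - τ (i+1) - n (i+1) : ℕ) : ℝ) + 1) with hE
  set B : ℕ → ℝ := fun i => (-1)^(kk i) * ((n (i+1)).choose (kk i) : ℝ) with hB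
  set D : ℕ → ℝ := fun i => (ascPochhammer ℝ (kk i)).eval ((n m + 1 + K i : ℕ) : ℝ) with hD
  have hKsucc : ∀ i, K (i+1) = K i + kk i := fun i => Finset.sum_range_succ kk i
  -- left side rewrite
  have hL : ∏ i ∈ range (m-1), stepW (n m + 1) (n (i+1)) (N - τ (i+1)) (K i) (kk i)
      = ∏ i ∈ range (m-1),
          (((N - τ (i+1)).choose (n (i+1)) : ℝ) * B i * (g i * D i) / E i) := by
    refine Finset.prod_congr rfl fun i hi => ?_
    have hi' : i < m - 1 := Finset.mem_range.mp hi
    have hnle : n (i+1) ≤ N - τ (i+1) := by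
      have := hmax (i+1) (by omega) (by omega); omega
    rw [aux_PF (hkk i hi') hnle]
  -- right side factor rewrite
  have hR : ∏ i ∈ range (m-1),
        ((ascPochhammer ℝ (kk i)).eval (-(n (i+1) : ℝ)) *
          (ascPochhammer ℝ (∑ a ∈ range (i+1), kk a)).eval ((1:ℝ) + n m + τ m - τ (i+2)) /
          (((kk i).factorial : ℝ) *
            (ascPochhammer ℝ (∑ a ∈ range (i+1), kk a)).eval
              ((1:ℝ) + n m + τ m - n (i+1) - τ (i+1))))
      = ∏ i ∈ range (m-1), (B i * g (i+1) / E i) := by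
    refine Finset.prod_congr rfl fun i hi => ?_
    have hi' : i < m - 1 := Finset.mem_range.mp hi
    have hkki : kk i ≤ n (i+1) := hkk i hi'
    have hnle : n (i+1) + τ (i+1) ≤ N := hmax (i+1) (by omega) (by omega)
    have hτ2 : τ (i+2) ≤ N := hτle (i+2) (by omega) (by omega)
    have harg1 : (1:ℝ) + n m + τ m - τ (i+2) = ((N - τ (i+2) : ℕ) : ℝ) + 1 := by
      rw [Nat.cast_sub hτ2]; push_cast [hN]; ring
    have harg2 : (1:ℝ) + n m + τ m - n (i+1) - τ (i+1)
        = ((N - τ (i+1) - n (i+1) : ℕ) : ℝ) + 1 := by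
      rw [Nat.cast_sub (by omega : n (i+1) ≤ N - τ (i+1)), Nat.cast_sub (by omega : τ (i+1) ≤ N)]
      push_cast [hN]; ring
    have hgi : g (i+1) = (ascPochhammer ℝ (K i + kk i)).eval (((N - τ (i+2) : ℕ) : ℝ) + 1) := by
      rw [hg]; simp only []
      rw [hKsucc i]
    have hEi : E i = (ascPochhammer ℝ (K i + kk i)).eval
        (((N - τ (i+1) - n (i+1) : ℕ) : ℝ) + 1) := rfl
    rw [harg1, harg2, Finset.sum_range_succ kk i, aux_ascP_neg hkki, hgi, hEi, hB]
    have hfne : ((kk i).factorial : ℝ) ≠ 0 := by positivity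
    set X := (ascPochhammer ℝ (K i + kk i)).eval (((N - τ (i+2) : ℕ) : ℝ) + 1)
    set Y := (ascPochhammer ℝ (K i + kk i)).eval (((N - τ (i+1) - n (i+1) : ℕ) : ℝ) + 1)
    calc (-1)^(kk i) * ((n (i+1)).choose (kk i) : ℝ) * ((kk i).factorial : ℝ) * X
          / (((kk i).factorial : ℝ) * Y)
        = (((kk i).factorial : ℝ) * ((-1)^(kk i) * ((n (i+1)).choose (kk i) : ℝ) * X))
          / (((kk i).factorial : ℝ) * Y) := by ring
      _ = (-1)^(kk i) * ((n (i+1)).choose (kk i) : ℝ) * X / Y :=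
          mul_div_mul_left _ _ hfne
  rw [hL, hR, aux_split5, aux_split3]
  -- A-product equals the Icc product
  have hA : ∏ j ∈ Icc 1 m, ((N - τ j).choose (n j) : ℝ)
      = ∏ i ∈ range (m-1), ((N - τ (i+1)).choose (n (i+1)) : ℝ) := by
    rw [← Finset.Ico_add_one_right_eq_Icc, Finset.prod_Ico_eq_prod_range]
    rw [show m + 1 - 1 = (m-1) + 1 by omega, Finset.prod_range_succ]
    rw [show 1 + (m-1) = m by omega, show N - τ m = n m by omega, Nat.choose_self]
    rw [Nat.cast_one, mul_one]
    exact Finset.prod_congr rfl fun i _ => by rw [show 1 + i = i + 1 by omega]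
  -- D-product telescopes
  have hD2 : ∏ i ∈ range (m-1), D i
      = (ascPochhammer ℝ (K (m-1))).eval ((n m : ℝ) + 1) := by
    have : ∀ i ∈ range (m-1), D i
        = (ascPochhammer ℝ (kk i)).eval (((n m : ℝ) + 1) + ((∑ a ∈ range i, kk a : ℕ) : ℝ)) := by
      intro i _
      rw [hD]; simp only []
      congr 1
      simp only [hK]
      push_cast
      ring
    rw [Finset.prod_congr rfl this, aux_tel ((n m : ℝ) + 1) kk (m-1)]
  -- g-shift
  have hg0 : g 0 = 1 := by
    rw [hg]; simp [hK]
  have hglast : g (m-1) = (ascPochhammer ℝ (K (m-1))).eval ((n m : ℝ) + 1) := by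
    rw [hg]; simp only []
    rw [show m - 1 + 1 = m by omega, show N - τ m = n m by omega]
  have hgshift : ∏ i ∈ range (m-1), g (i+1)
      = (∏ i ∈ range (m-1), g i) * (ascPochhammer ℝ (K (m-1))).eval ((n m : ℝ) + 1) := by
    have e1 := Finset.prod_range_succ g (m-1)
    have e2 := Finset.prod_range_succ' g (m-1)
    rw [e1, hg0, mul_one, hglast] at e2
    exact e2.symm
  rw [← hA, hD2, hgshift]
  ring

lemma aux_inv0 {t : ℝ} (ht0 : 0 < t) (ht1 : t < 1) {nm τm τ0 : ℕ}
    (hτ : τm ≤ τ0) (hτ' : τ0 - τm ≤ nm) (h1 : 1 ≤ nm) :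
    ∀ y ∈ Ioi (0:ℝ),
    Tdiff (τm : ℝ) nm (fun z => z ^ τ0 / (1 - (1 - z) * t)) y
    = ((-1:ℝ)^nm * t^(nm + τm - τ0) * (t-1)^(τ0 - τm)) *
        (y^(nm + τm) * ((1-t+y*t)⁻¹)^(nm+1)) := by
  intro y hy
  have hy' : (0:ℝ) < y := hy
  rw [Tdiff]
  have heq : Set.EqOn (fun z : ℝ => z ^ (-(τm:ℝ)) * (z ^ τ0 / (1 - (1 - z) * t)))
      (fun z => z ^ (τ0 - τm) * (1-t+z*t)⁻¹) (Ioi 0) := by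
    intro z hz
    have hz' : (0:ℝ) < z := hz
    simp only []
    rw [div_eq_mul_inv, show (1 : ℝ) - (1-z)*t = 1 - t + z*t by ring]
    rw [← Real.rpow_natCast z τ0, ← Real.rpow_natCast z (τ0 - τm)]
    rw [← mul_assoc, ← Real.rpow_add hz']
    congr 2
    rw [Nat.cast_sub hτ]
    ring
  rw [aux_congr isOpen_Ioi heq nm y hy]
  rw [aux_base ht0 ht1 hτ' h1 y hy]
  have hr : y ^ ((nm : ℝ) + (τm:ℝ)) = y ^ (nm + τm : ℕ) := by
    rw [← Real.rpow_natCast y (nm + τm)]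
    congr 1
    push_cast; ring
  rw [hr]
  have hfne : ((nm).factorial : ℝ) ≠ 0 := by positivity
  have hexp : nm - (τ0 - τm) = nm + τm - τ0 := by omega
  rw [hexp]
  rw [show (1 / ((nm.factorial : ℝ))) * y ^ (nm + τm) *
      ((-1:ℝ)^nm * nm.factorial * (t-1)^(τ0 - τm) * t^(nm + τm - τ0) * ((1-t+y*t)⁻¹)^(nm+1))
      = ((1 / ((nm.factorial : ℝ))) * nm.factorial) *
        ((-1:ℝ)^nm * (t-1)^(τ0 - τm) * t^(nm + τm - τ0) * (y ^ (nm+τm) * ((1-t+y*t)⁻¹)^(nm+1)))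
      by ring]
  rw [one_div_mul_cancel hfne]
  ring

lemma extf_snoc_lt {j : ℕ} (k : Fin j → ℕ) (l : ℕ) {a : ℕ} (ha : a < j) :
    extf (j+1) (Fin.snoc k l) a = extf j k a := by
  rw [extf, extf, dif_pos ha, dif_pos (by omega : a < j + 1)]
  have : (⟨a, by omega⟩ : Fin (j+1)) = Fin.castSucc ⟨a, ha⟩ := rfl
  rw [this, Fin.snoc_castSucc]

lemma extf_snoc_last {j : ℕ} (k : Fin j → ℕ) (l : ℕ) :
    extf (j+1) (Fin.snoc k l) j = l := by
  rw [extf, dif_pos (by omega : j < j + 1)]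
  have : (⟨j, by omega⟩ : Fin (j+1)) = Fin.last j := rfl
  rw [this, Fin.snoc_last]

lemma extf_sum_snoc {j : ℕ} (k : Fin j → ℕ) (l : ℕ) {i : ℕ} (hi : i ≤ j) :
    ∑ a ∈ range i, extf (j+1) (Fin.snoc k l) a = ∑ a ∈ range i, extf j k a :=
  Finset.sum_congr rfl fun a ha => extf_snoc_lt k l (by have := Finset.mem_range.mp ha; omega)

lemma aux_snoc_sum {j : ℕ} (r : Fin (j+1) → ℕ) (G : (Fin (j+1) → ℕ) → ℝ) :
    ∑ k ∈ Fintype.piFinset (fun i => Finset.range (r i)), G k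
    = ∑ k ∈ Fintype.piFinset (fun i : Fin j => Finset.range (r i.castSucc)),
        ∑ l ∈ Finset.range (r (Fin.last j)), G (Fin.snoc k l) := by
  rw [← Finset.sum_product']
  apply Finset.sum_nbij' (i := fun k => (Fin.init k, k (Fin.last j)))
    (j := fun p => Fin.snoc p.1 p.2)
  · intro k hk
    simp only [Finset.mem_product, Fintype.mem_piFinset] at hk ⊢
    exact ⟨fun i => hk i.castSucc, hk (Fin.last j)⟩
  · intro p hp
    simp only [Finset.mem_product, Fintype.mem_piFinset] at hp ⊢
    intro i
    induction i using Fin.lastCases with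
    | last => simpa using hp.2
    | cast i' => simpa using hp.1 i'
  · intro k _
    exact Fin.snoc_init_self k
  · intro p _
    simp [Fin.init_snoc, Fin.snoc_last]
  · intro k _
    rw [Fin.snoc_init_self k]

lemma extf_apply {r : ℕ} (k : Fin r → ℕ) (i : Fin r) : extf r k i.1 = k i := by
  rw [extf, dif_pos i.2]

lemma aux_fin_sum {r : ℕ} (k : Fin r → ℕ) :
    ∑ i : Fin r, k i = ∑ a ∈ range r, extf r k a := by
  rw [← Fin.sum_univ_eq_sum_range (fun a => extf r k a) r]
  exact Finset.sum_congr rfl fun i _ => (extf_apply k i).symm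

lemma aux_filter_sum {r : ℕ} (k : Fin r → ℕ) (j : Fin r) :
    ∑ i ∈ univ.filter (fun i : Fin r => i ≤ j), k i = ∑ a ∈ range (j.1+1), extf r k a := by
  rw [Finset.sum_filter]
  have h1 : (∑ i : Fin r, if i ≤ j then k i else 0)
      = ∑ i : Fin r, (fun a => if a ≤ j.1 then extf r k a else 0) i.1 := by
    refine Finset.sum_congr rfl fun i _ => ?_
    simp only [Fin.le_def, extf_apply]
  rw [h1, Fin.sum_univ_eq_sum_range (fun a => if a ≤ j.1 then extf r k a else 0) r]
  rw [← Finset.sum_subset (Finset.range_subset_range.mpr (by omega : j.1+1 ≤ r))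
    (fun a _ ha => if_neg (by simp at ha ⊢; omega))]
  exact Finset.sum_congr rfl fun a ha => if_pos (by simp at ha; omega)

lemma aux_prod_pow {r : ℕ} (u : ℝ) (k : Fin r → ℕ) (A : Fin r → ℝ) :
    ∏ j : Fin r, (A j * u ^ (k j)) = (∏ j : Fin r, A j) * u ^ (∑ j : Fin r, k j) := by
  rw [Finset.prod_mul_distrib, Finset.prod_pow_eq_pow_sum]

lemma aux_dcoef_stepW (t : ℝ) {l n' : ℕ} (hl : l ≤ n') (M a K : ℕ) :
    dcoef t n' (n'-l) (a+K) (M+K) = stepW M n' a K l * n'.factorial * t^l := by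
  rw [dcoef, stepW, show n' - (n'-l) = l by omega]
  have hfne : ((n'.factorial : ℝ)) ≠ 0 := by positivity
  rw [neg_pow]
  field_simp

lemma aux_inv (m : ℕ) (hm : 1 ≤ m) (n τ : ℕ → ℕ)
    (hn : ∀ j, 1 ≤ j → j ≤ m → 0 < n j) (hτ : τ m ≤ τ 0) (hτ' : τ 0 - τ m ≤ n m)
    (hmax : ∀ j, 1 ≤ j → j ≤ m - 1 → n j + τ j ≤ n m + τ m)
    (t : ℝ) (ht0 : 0 < t) (ht1 : t < 1) :
    ∀ j, j ≤ m - 1 → ∀ y ∈ Ioi (0:ℝ),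
    List.foldl (fun h jj => Tdiff (τ jj : ℝ) (n jj) h)
      (Tdiff (τ m : ℝ) (n m) (fun z => z ^ τ 0 / (1 - (1 - z) * t))) (List.range' 1 j) y
    = ((-1:ℝ)^(n m) * t^(n m + τ m - τ 0) * (t-1)^(τ 0 - τ m)) *
      ∑ k ∈ Fintype.piFinset (fun i : Fin j => Finset.range (n (i.1+1)+1)),
        (∏ i ∈ range j, stepW (n m + 1) (n (i+1)) (n m + τ m - τ (i+1))
            (∑ a ∈ range i, extf j k a) (extf j k i)) *
        t^(∑ a ∈ range j, extf j k a) *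
        (y^(n m + τ m + ∑ a ∈ range j, extf j k a) *
          ((1-t+y*t)⁻¹)^(n m + 1 + ∑ a ∈ range j, extf j k a)) := by
  intro j
  induction j with
  | zero =>
    intro _ y hy
    simp only [List.range'_zero, List.foldl_nil]
    rw [aux_inv0 ht0 ht1 hτ hτ' (hn m hm le_rfl) y hy]
    simp
  | succ j ihj =>
    intro hj1 y hy
    have hj : j ≤ m - 1 := by omega
    have hnτ' : n (j+1) + τ (j+1) ≤ n m + τ m := hmax (j+1) (by omega) hj1
    -- unfold the chain one step
    rw [List.range'_concat, List.foldl_append, List.foldl_cons, List.foldl_nil,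
      show 1 + 1 * j = j + 1 by omega]
    rw [Tdiff]
    -- rewrite the twisted function as an explicit sum
    have heq : Set.EqOn
        (fun z => z ^ (-(τ (j+1) : ℝ)) * (List.foldl (fun h jj => Tdiff (τ jj : ℝ) (n jj) h)
          (Tdiff (τ m : ℝ) (n m) (fun z => z ^ τ 0 / (1 - (1 - z) * t))) (List.range' 1 j)) z)
        (fun z => ∑ k ∈ Fintype.piFinset (fun i : Fin j => Finset.range (n (i.1+1)+1)),
          (((-1:ℝ)^(n m) * t^(n m + τ m - τ 0) * (t-1)^(τ 0 - τ m)) *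
            (∏ i ∈ range j, stepW (n m + 1) (n (i+1)) (n m + τ m - τ (i+1))
              (∑ a ∈ range i, extf j k a) (extf j k i)) *
            t^(∑ a ∈ range j, extf j k a)) *
          (z ^ ((n m + τ m - τ (j+1)) + ∑ a ∈ range j, extf j k a) *
            ((1-t+z*t)⁻¹) ^ ((n m + 1) + ∑ a ∈ range j, extf j k a))) (Ioi 0) := by
      intro z hz
      have hz' : (0:ℝ) < z := hz
      simp only []
      rw [ihj hj z hz]
      simp only [Finset.mul_sum]
      refine Finset.sum_congr rfl fun k _ => ?_
      have hzp : z ^ (-(τ (j+1) : ℝ)) * z ^ (n m + τ m + ∑ a ∈ range j, extf j k a)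
          = z ^ ((n m + τ m - τ (j+1)) + ∑ a ∈ range j, extf j k a) := by
        rw [← Real.rpow_natCast z (n m + τ m + ∑ a ∈ range j, extf j k a),
          ← Real.rpow_natCast z ((n m + τ m - τ (j+1)) + ∑ a ∈ range j, extf j k a),
          ← Real.rpow_add hz']
        congr 1
        push_cast [Nat.cast_sub (show τ (j+1) ≤ n m + τ m from by omega)]
        ring
      rw [← hzp]
      ring
    rw [aux_congr isOpen_Ioi heq (n (j+1)) y hy]
    rw [aux_iter_sum ht0 ht1 (Fintype.piFinset (fun i : Fin j => Finset.range (n (i.1+1)+1)))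
      (fun k => ((-1:ℝ)^(n m) * t^(n m + τ m - τ 0) * (t-1)^(τ 0 - τ m)) *
        (∏ i ∈ range j, stepW (n m + 1) (n (i+1)) (n m + τ m - τ (i+1))
          (∑ a ∈ range i, extf j k a) (extf j k i)) * t^(∑ a ∈ range j, extf j k a))
      (fun k => (n m + τ m - τ (j+1)) + ∑ a ∈ range j, extf j k a)
      (fun k => (n m + 1) + ∑ a ∈ range j, extf j k a)
      (fun k _ => by
        show 1 ≤ (n m + 1) + ∑ a ∈ range j, extf j k a
        omega) (n (j+1))
      (fun k _ => by
        show n (j+1) ≤ (n m + τ m - τ (j+1)) + ∑ a ∈ range j, extf j k a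
        omega) y hy]
    beta_reduce
    -- right-hand side: split the (j+1)-tuples
    rw [aux_snoc_sum (fun i : Fin (j+1) => n (i.1+1)+1)]
    simp only [Fin.coe_castSucc, Fin.val_last]
    rw [Finset.mul_sum, Finset.mul_sum]
    refine Finset.sum_congr rfl fun k hk => ?_
    -- reflect the inner sum
    rw [← Finset.sum_range_reflect (fun ii =>
      dcoef t (n (j+1)) ii ((n m + τ m - τ (j+1)) + ∑ a ∈ range j, extf j k a)
          ((n m + 1) + ∑ a ∈ range j, extf j k a) *
        (y ^ (((n m + τ m - τ (j+1)) + ∑ a ∈ range j, extf j k a) - ii) *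
          ((1-t+y*t)⁻¹) ^ (((n m + 1) + ∑ a ∈ range j, extf j k a) + (n (j+1) - ii))))
      (n (j+1)+1)]
    simp only [Finset.mul_sum]
    refine Finset.sum_congr rfl fun l hl => ?_
    have hl' : l ≤ n (j+1) := by have := Finset.mem_range.mp hl; omega
    rw [show n (j+1) + 1 - 1 - l = n (j+1) - l from by omega]
    -- rewrite the snoc weights on the RHS
    have hKTsnoc : ∑ a ∈ range (j+1), extf (j+1) (Fin.snoc k l) a
        = (∑ a ∈ range j, extf j k a) + l := by
      rw [Finset.sum_range_succ, extf_snoc_last, extf_sum_snoc k l le_rfl]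
    have hWtsnoc : ∏ i ∈ range (j+1), stepW (n m + 1) (n (i+1)) (n m + τ m - τ (i+1))
        (∑ a ∈ range i, extf (j+1) (Fin.snoc k l) a) (extf (j+1) (Fin.snoc k l) i)
        = (∏ i ∈ range j, stepW (n m + 1) (n (i+1)) (n m + τ m - τ (i+1))
            (∑ a ∈ range i, extf j k a) (extf j k i)) *
          stepW (n m + 1) (n (j+1)) (n m + τ m - τ (j+1)) (∑ a ∈ range j, extf j k a) l := by
      rw [Finset.prod_range_succ, extf_snoc_last, extf_sum_snoc k l le_rfl]
      congr 1
      refine Finset.prod_congr rfl fun i hi => ?_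
      have hij : i < j := Finset.mem_range.mp hi
      rw [extf_snoc_lt k l hij, extf_sum_snoc k l (by omega)]
    rw [hKTsnoc, hWtsnoc]
    -- now pure computation
    rw [aux_dcoef_stepW t hl' (n m + 1) (n m + τ m - τ (j+1)) (∑ a ∈ range j, extf j k a)]
    have hyexp : y ^ ((n (j+1) : ℝ) + (τ (j+1) : ℝ)) = y ^ (n (j+1) + τ (j+1) : ℕ) := by
      rw [← Real.rpow_natCast y (n (j+1) + τ (j+1))]
      congr 1
      push_cast
      ring
    rw [hyexp]
    have hnle : n (j+1) ≤ n m + τ m - τ (j+1) := by omega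
    rw [show ((n m + τ m - τ (j+1)) + ∑ a ∈ range j, extf j k a) - (n (j+1) - l)
      = (n m + τ m + ((∑ a ∈ range j, extf j k a) + l)) - (n (j+1) + τ (j+1)) from by omega]
    rw [show ((n m + 1) + ∑ a ∈ range j, extf j k a) + (n (j+1) - (n (j+1) - l))
      = n m + 1 + ((∑ a ∈ range j, extf j k a) + l) from by omega]
    have hyy : y ^ (n (j+1) + τ (j+1) : ℕ) *
        y ^ ((n m + τ m + ((∑ a ∈ range j, extf j k a) + l)) - (n (j+1) + τ (j+1)))
        = y ^ (n m + τ m + ((∑ a ∈ range j, extf j k a) + l)) := by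
      rw [← pow_add]
      congr 1
      omega
    have hfne : (((n (j+1)).factorial : ℝ)) ≠ 0 := by positivity
    calc 1 / ((n (j+1)).factorial : ℝ) * y ^ (n (j+1) + τ (j+1) : ℕ) *
          (((-1:ℝ)^(n m) * t^(n m + τ m - τ 0) * (t-1)^(τ 0 - τ m)) *
            (∏ i ∈ range j, stepW (n m + 1) (n (i+1)) (n m + τ m - τ (i+1))
              (∑ a ∈ range i, extf j k a) (extf j k i)) * t^(∑ a ∈ range j, extf j k a) *
            (stepW (n m + 1) (n (j+1)) (n m + τ m - τ (j+1)) (∑ a ∈ range j, extf j k a) l *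
              (n (j+1)).factorial * t ^ l *
              (y ^ ((n m + τ m + ((∑ a ∈ range j, extf j k a) + l)) - (n (j+1) + τ (j+1))) *
                ((1-t+y*t)⁻¹) ^ (n m + 1 + ((∑ a ∈ range j, extf j k a) + l)))))
        = (1 / ((n (j+1)).factorial : ℝ) * (n (j+1)).factorial) *
            (((-1:ℝ)^(n m) * t^(n m + τ m - τ 0) * (t-1)^(τ 0 - τ m)) *
              ((∏ i ∈ range j, stepW (n m + 1) (n (i+1)) (n m + τ m - τ (i+1))
                (∑ a ∈ range i, extf j k a) (extf j k i)) *
                stepW (n m + 1) (n (j+1)) (n m + τ m - τ (j+1)) (∑ a ∈ range j, extf j k a) l) *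
              (t^(∑ a ∈ range j, extf j k a) * t ^ l) *
              ((y ^ (n (j+1) + τ (j+1) : ℕ) *
                y ^ ((n m + τ m + ((∑ a ∈ range j, extf j k a) + l)) - (n (j+1) + τ (j+1)))) *
                ((1-t+y*t)⁻¹) ^ (n m + 1 + ((∑ a ∈ range j, extf j k a) + l)))) := by ring
      _ = ((-1:ℝ)^(n m) * t^(n m + τ m - τ 0) * (t-1)^(τ 0 - τ m)) *
            (((∏ i ∈ range j, stepW (n m + 1) (n (i+1)) (n m + τ m - τ (i+1))
                (∑ a ∈ range i, extf j k a) (extf j k i)) *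
              stepW (n m + 1) (n (j+1)) (n m + τ m - τ (j+1)) (∑ a ∈ range j, extf j k a) l) *
              t ^ ((∑ a ∈ range j, extf j k a) + l) *
              (y ^ (n m + τ m + ((∑ a ∈ range j, extf j k a) + l)) *
                ((1-t+y*t)⁻¹) ^ (n m + 1 + ((∑ a ∈ range j, extf j k a) + l)))) := by
          rw [one_div_mul_cancel hfne, hyy, ← pow_add]
          ring

theorem stmt_18 (m : ℕ) (hm : 1 ≤ m) (n τ : ℕ → ℕ)
    (hn : ∀ j, 1 ≤ j → j ≤ m → 0 < n j)
    (hτ : τ m ≤ τ 0) (hτ' : τ 0 - τ m ≤ n m)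
    (hmax : ∀ j, 1 ≤ j → j ≤ m - 1 → n j + τ j ≤ n m + τ m)
    (x t : ℝ) (hx : x ∈ Set.Ioo (0 : ℝ) 1) (ht : t ∈ Set.Ioo (0 : ℝ) 1) :
    TdiffChain m n τ (fun y => y ^ τ 0 / (1 - (1 - y) * t)) x =
      (-1 : ℝ) ^ (n m) * (∏ j ∈ Finset.Icc 1 m, ((n m + τ m - τ j).choose (n j) : ℝ)) *
        (x ^ (n m + τ m) * t ^ (n m + τ m - τ 0) * (t - 1) ^ (τ 0 - τ m) /
          (1 - t + x * t) ^ (n m + 1)) *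
        Q m n τ (x * t / (1 - t + x * t)) := by
  obtain ⟨hx0, hx1⟩ := hx
  obtain ⟨ht0, ht1⟩ := ht
  have hv : (0:ℝ) < 1 - t + x * t := by nlinarith
  have hvne : (1 - t + x * t) ≠ 0 := ne_of_gt hv
  rw [TdiffChain]
  rw [aux_inv m hm n τ hn hτ hτ' hmax t ht0 ht1 (m-1) le_rfl x (Set.mem_Ioi.mpr hx0)]
  -- rewrite each summand in terms of u-powers
  have hsum : ∑ k ∈ Fintype.piFinset (fun i : Fin (m-1) => Finset.range (n (i.1+1)+1)),
      (∏ i ∈ range (m-1), stepW (n m + 1) (n (i+1)) (n m + τ m - τ (i+1))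
          (∑ a ∈ range i, extf (m-1) k a) (extf (m-1) k i)) *
      t^(∑ a ∈ range (m-1), extf (m-1) k a) *
      (x^(n m + τ m + ∑ a ∈ range (m-1), extf (m-1) k a) *
        ((1-t+x*t)⁻¹)^(n m + 1 + ∑ a ∈ range (m-1), extf (m-1) k a))
      = (x^(n m + τ m) * ((1-t+x*t)⁻¹)^(n m + 1)) *
        ∑ k ∈ Fintype.piFinset (fun i : Fin (m-1) => Finset.range (n (i.1+1)+1)),
          (∏ i ∈ range (m-1), stepW (n m + 1) (n (i+1)) (n m + τ m - τ (i+1))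
              (∑ a ∈ range i, extf (m-1) k a) (extf (m-1) k i)) *
          (x * t / (1 - t + x * t))^(∑ a ∈ range (m-1), extf (m-1) k a) := by
    rw [Finset.mul_sum]
    refine Finset.sum_congr rfl fun k _ => ?_
    have hu : (x * t / (1 - t + x * t))^(∑ a ∈ range (m-1), extf (m-1) k a)
        = x^(∑ a ∈ range (m-1), extf (m-1) k a) * t^(∑ a ∈ range (m-1), extf (m-1) k a) *
          ((1-t+x*t)⁻¹)^(∑ a ∈ range (m-1), extf (m-1) k a) := by
      rw [div_eq_mul_inv, mul_pow, mul_pow]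
    rw [hu, pow_add, pow_add]
    ring
  rw [hsum]
  -- the Q-identity
  have hQ : ∑ k ∈ Fintype.piFinset (fun i : Fin (m-1) => Finset.range (n (i.1+1)+1)),
      (∏ i ∈ range (m-1), stepW (n m + 1) (n (i+1)) (n m + τ m - τ (i+1))
          (∑ a ∈ range i, extf (m-1) k a) (extf (m-1) k i)) *
      (x * t / (1 - t + x * t))^(∑ a ∈ range (m-1), extf (m-1) k a)
      = (∏ j ∈ Finset.Icc 1 m, ((n m + τ m - τ j).choose (n j) : ℝ)) *
        Q m n τ (x * t / (1 - t + x * t)) := by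
    rcases eq_or_lt_of_le hm with rfl | hm2
    · -- m = 1
      rw [Q, if_pos rfl]
      rw [show (1:ℕ) - 1 = 0 from rfl]
      rw [show Finset.Icc 1 1 = {1} from rfl, Finset.prod_singleton]
      simp [Nat.add_sub_cancel]
    · -- m ≥ 2
      have hm1 : m ≠ 1 := by omega
      rw [Q, if_neg hm1, Finset.mul_sum]
      refine Finset.sum_congr rfl fun k hk => ?_
      have hkk : ∀ i, i < m - 1 → extf (m-1) k i ≤ n (i+1) := by
        intro i hi
        rw [extf, dif_pos hi]
        have := (Fintype.mem_piFinset.mp hk) ⟨i, hi⟩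
        simpa using Nat.lt_succ_iff.mp (Finset.mem_range.mp this)
      -- convert the Fin-indexed product to a range-indexed product
      have hconv : ∏ j : Fin (m - 1),
          ((ascPochhammer ℝ (k j)).eval (-(n (j.1 + 1) : ℝ)) *
              (ascPochhammer ℝ
                  (∑ i ∈ Finset.univ.filter fun i : Fin (m - 1) => i ≤ j, k i)).eval
                ((1 : ℝ) + n m + τ m - τ (j.1 + 2)) /
              (((k j).factorial : ℝ) *
                (ascPochhammer ℝ
                    (∑ i ∈ Finset.univ.filter fun i : Fin (m - 1) => i ≤ j, k i)).eval
                  ((1 : ℝ) + n m + τ m - n (j.1 + 1) - τ (j.1 + 1))) *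
            (x * t / (1 - t + x * t)) ^ k j)
          = (∏ i ∈ range (m-1),
              ((ascPochhammer ℝ (extf (m-1) k i)).eval (-(n (i+1) : ℝ)) *
                (ascPochhammer ℝ (∑ a ∈ range (i+1), extf (m-1) k a)).eval
                  ((1:ℝ) + n m + τ m - τ (i+2)) /
                (((extf (m-1) k i).factorial : ℝ) *
                  (ascPochhammer ℝ (∑ a ∈ range (i+1), extf (m-1) k a)).eval
                    ((1:ℝ) + n m + τ m - n (i+1) - τ (i+1))))) *
            (x * t / (1 - t + x * t)) ^ (∑ a ∈ range (m-1), extf (m-1) k a) := by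
        rw [aux_prod_pow, aux_fin_sum]
        congr 1
        rw [← Fin.prod_univ_eq_prod_range (fun i =>
          ((ascPochhammer ℝ (extf (m-1) k i)).eval (-(n (i+1) : ℝ)) *
            (ascPochhammer ℝ (∑ a ∈ range (i+1), extf (m-1) k a)).eval
              ((1:ℝ) + n m + τ m - τ (i+2)) /
            (((extf (m-1) k i).factorial : ℝ) *
              (ascPochhammer ℝ (∑ a ∈ range (i+1), extf (m-1) k a)).eval
                ((1:ℝ) + n m + τ m - n (i+1) - τ (i+1))))) (m-1)]
        refine Finset.prod_congr rfl fun j _ => ?_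
        rw [aux_filter_sum k j, extf_apply]
      rw [hconv, aux_tuple n τ m hm (extf (m-1) k) hkk hmax]
      ring
  rw [hQ, div_eq_mul_inv, inv_pow]
  ring
end
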